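/- arXiv:1507.03862 — 2 statements merged into one kernel-verified Lean document; each statement's English description precedes it below -/
import Mathlib

section
/- Let (𝒳, 𝒴) be an admissible balanced pair in an abelian category 𝒜 and (𝒞, 𝒟) a hereditary relative cotorsion pair. If every object of 𝒜 has a minimal right 𝒞-approximation and every object of 𝒞 has a minimal left 𝒟-approximation, then every object of 𝒜 has a minimal left 𝒟-approximation; hence (𝒞, 𝒟) is perfect. -/
open CategoryTheory Limits

universe v u

variable {A : Type u} [Category.{v} A] [Abelian A]

/-- `Hom(X, -)` for `X ∈ 𝒳` carries the short complex `S` to a short exact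
sequence of abelian groups. -/
def SESRightAcyclic (𝒳 : Set A) (S : ShortComplex A) : Prop :=
  ∀ X ∈ 𝒳,
    (Function.Injective fun h : X ⟶ S.X₁ => h ≫ S.f) ∧
    (∀ h : X ⟶ S.X₂, h ≫ S.g = 0 → ∃ k : X ⟶ S.X₁, k ≫ S.f = h) ∧
    (Function.Surjective fun h : X ⟶ S.X₂ => h ≫ S.g)

/-- `Hom(-, Y)` for `Y ∈ 𝒴` carries the short complex `S` to a short exact
sequence of abelian groups. -/
def SESLeftAcyclic (𝒴 : Set A) (S : ShortComplex A) : Prop :=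
  ∀ Y ∈ 𝒴,
    (Function.Injective fun h : S.X₃ ⟶ Y => S.g ≫ h) ∧
    (∀ h : S.X₂ ⟶ Y, S.f ≫ h = 0 → ∃ k : S.X₃ ⟶ Y, S.g ≫ k = h) ∧
    (Function.Surjective fun h : S.X₂ ⟶ Y => S.f ≫ h)

/-- A `⁎`-acyclic short exact sequence: short exact, right `𝒳`-acyclic and
left `𝒴`-acyclic. -/
def SESStarAcyclic (𝒳 𝒴 : Set A) (S : ShortComplex A) : Prop :=
  S.ShortExact ∧ SESRightAcyclic 𝒳 S ∧ SESLeftAcyclic 𝒴 S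

/-- A cochain complex `C` is right `𝒳`-acyclic if `Hom(X, C)` is acyclic for every `X ∈ 𝒳`. -/
def RightAcyclicComplex (𝒳 : Set A) (C : CochainComplex A ℤ) : Prop :=
  ∀ X ∈ 𝒳, ∀ n : ℤ, ∀ h : X ⟶ C.X n, h ≫ C.d n (n + 1) = 0 →
    ∃ k : X ⟶ C.X (n - 1), k ≫ C.d (n - 1) n = h

/-- A cochain complex `C` is left `𝒴`-acyclic if `Hom(C, Y)` is acyclic for every `Y ∈ 𝒴`. -/
def LeftAcyclicComplex (𝒴 : Set A) (C : CochainComplex A ℤ) : Prop :=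
  ∀ Y ∈ 𝒴, ∀ n : ℤ, ∀ h : C.X n ⟶ Y, C.d (n - 1) n ≫ h = 0 →
    ∃ k : C.X (n + 1) ⟶ Y, C.d n (n + 1) ≫ k = h

/-- `f` is a right `𝒳`-quasi-isomorphism iff its mapping cone is right `𝒳`-acyclic. -/
noncomputable def RightQuasiIso (𝒳 : Set A) {C D : CochainComplex A ℤ} (f : C ⟶ D) : Prop :=
  RightAcyclicComplex 𝒳 (CochainComplex.mappingCone f)

/-- `f` is a `⁎`-quasi-isomorphism: its mapping cone is right `𝒳`-acyclic and left `𝒴`-acyclic. -/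
noncomputable def StarQuasiIso (𝒳 𝒴 : Set A) {C D : CochainComplex A ℤ} (f : C ⟶ D) : Prop :=
  RightAcyclicComplex 𝒳 (CochainComplex.mappingCone f) ∧
    LeftAcyclicComplex 𝒴 (CochainComplex.mappingCone f)

/-- A bounded-above complex with all components in `𝒳`. -/
def MinusComplexIn (𝒳 : Set A) (C : CochainComplex A ℤ) : Prop :=
  (∃ b : ℤ, ∀ i : ℤ, b < i → IsZero (C.X i)) ∧ ∀ i : ℤ, C.X i ∈ 𝒳

/-- A bounded complex. -/
def BoundedComplex (C : CochainComplex A ℤ) : Prop :=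
  ∃ a b : ℤ, ∀ i : ℤ, i < a ∨ b < i → IsZero (C.X i)

/-- A proper `𝒳`-resolution `⋯ → P⁻¹ → P⁰ —ε→ M → 0`: the components of `P` in
nonpositive degrees lie in `𝒳`, the positive components vanish, and the augmented
complex is right `𝒳`-acyclic. -/
def IsProperXResolution (𝒳 : Set A) (M : A) (P : CochainComplex A ℤ) (ε : P.X 0 ⟶ M) : Prop :=
  (∀ i : ℤ, 0 < i → IsZero (P.X i)) ∧ (∀ i : ℤ, i ≤ 0 → P.X i ∈ 𝒳) ∧
  P.d (-1) 0 ≫ ε = 0 ∧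
  ∀ X ∈ 𝒳,
    (∀ h : X ⟶ M, ∃ k : X ⟶ P.X 0, k ≫ ε = h) ∧
    (∀ h : X ⟶ P.X 0, h ≫ ε = 0 → ∃ k : X ⟶ P.X (-1), k ≫ P.d (-1) 0 = h) ∧
    (∀ n : ℤ, n < 0 → ∀ h : X ⟶ P.X n, h ≫ P.d n (n + 1) = 0 →
      ∃ k : X ⟶ P.X (n - 1), k ≫ P.d (n - 1) n = h)

/-- The augmented complex `⋯ → P⁻¹ → P⁰ —ε→ M → 0` is left `𝒴`-acyclic. -/
def AugResLeftAcyclic (𝒴 : Set A) (M : A) (P : CochainComplex A ℤ) (ε : P.X 0 ⟶ M) : Prop :=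
  ∀ Y ∈ 𝒴,
    (∀ h : M ⟶ Y, ε ≫ h = 0 → h = 0) ∧
    (∀ h : P.X 0 ⟶ Y, P.d (-1) 0 ≫ h = 0 → ∃ k : M ⟶ Y, ε ≫ k = h) ∧
    (∀ n : ℤ, n < 0 → ∀ h : P.X n ⟶ Y, P.d (n - 1) n ≫ h = 0 →
      ∃ k : P.X (n + 1) ⟶ Y, P.d n (n + 1) ≫ k = h)

/-- A proper `𝒴`-coresolution `0 → N —η→ Q⁰ → Q¹ → ⋯`. -/
def IsProperYCoresolution (𝒴 : Set A) (N : A) (Q : CochainComplex A ℤ) (η : N ⟶ Q.X 0) : Prop :=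
  (∀ i : ℤ, i < 0 → IsZero (Q.X i)) ∧ (∀ i : ℤ, 0 ≤ i → Q.X i ∈ 𝒴) ∧
  η ≫ Q.d 0 1 = 0 ∧
  ∀ Y ∈ 𝒴,
    (∀ h : N ⟶ Y, ∃ k : Q.X 0 ⟶ Y, η ≫ k = h) ∧
    (∀ h : Q.X 0 ⟶ Y, η ≫ h = 0 → ∃ k : Q.X 1 ⟶ Y, Q.d 0 1 ≫ k = h) ∧
    (∀ n : ℤ, 0 < n → ∀ h : Q.X n ⟶ Y, Q.d (n - 1) n ≫ h = 0 →
      ∃ k : Q.X (n + 1) ⟶ Y, Q.d n (n + 1) ≫ k = h)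

/-- The augmented complex `0 → N —η→ Q⁰ → Q¹ → ⋯` is right `𝒳`-acyclic. -/
def AugCoresRightAcyclic (𝒳 : Set A) (N : A) (Q : CochainComplex A ℤ) (η : N ⟶ Q.X 0) : Prop :=
  ∀ X ∈ 𝒳,
    (∀ h : X ⟶ N, h ≫ η = 0 → h = 0) ∧
    (∀ h : X ⟶ Q.X 0, h ≫ Q.d 0 1 = 0 → ∃ k : X ⟶ N, k ≫ η = h) ∧
    (∀ n : ℤ, 0 < n → ∀ h : X ⟶ Q.X n, h ≫ Q.d n (n + 1) = 0 →
      ∃ k : X ⟶ Q.X (n - 1), k ≫ Q.d (n - 1) n = h)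

/-- `f : X ⟶ M` is a right `𝒳`-approximation of `M`. -/
def IsRightApprox (𝒳 : Set A) {X M : A} (f : X ⟶ M) : Prop :=
  X ∈ 𝒳 ∧ ∀ X' ∈ 𝒳, ∀ g : X' ⟶ M, ∃ h : X' ⟶ X, h ≫ f = g

/-- `f : M ⟶ Y` is a left `𝒴`-approximation of `M`. -/
def IsLeftApprox (𝒴 : Set A) {M Y : A} (f : M ⟶ Y) : Prop :=
  Y ∈ 𝒴 ∧ ∀ Y' ∈ 𝒴, ∀ g : M ⟶ Y', ∃ h : Y ⟶ Y', f ≫ h = g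

/-- A minimal (right minimal) right `𝒳`-approximation. -/
def IsMinimalRightApprox (𝒳 : Set A) {X M : A} (f : X ⟶ M) : Prop :=
  IsRightApprox 𝒳 f ∧ ∀ s : X ⟶ X, s ≫ f = f → IsIso s

/-- A minimal (left minimal) left `𝒴`-approximation. -/
def IsMinimalLeftApprox (𝒴 : Set A) {M Y : A} (f : M ⟶ Y) : Prop :=
  IsLeftApprox 𝒴 f ∧ ∀ s : Y ⟶ Y, f ≫ s = f → IsIso s

/-- `(𝒳, 𝒴)` is a balanced pair: `𝒳` is contravariantly finite, `𝒴` is covariantly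
finite, every object has a left `𝒴`-acyclic proper `𝒳`-resolution and a right
`𝒳`-acyclic proper `𝒴`-coresolution. -/
def IsBalancedPair (𝒳 𝒴 : Set A) : Prop :=
  (∀ M : A, ∃ (X : A) (f : X ⟶ M), IsRightApprox 𝒳 f) ∧
  (∀ M : A, ∃ (Y : A) (f : M ⟶ Y), IsLeftApprox 𝒴 f) ∧
  (∀ M : A, ∃ (P : CochainComplex A ℤ) (ε : P.X 0 ⟶ M),
    IsProperXResolution 𝒳 M P ε ∧ AugResLeftAcyclic 𝒴 M P ε) ∧
  (∀ N : A, ∃ (Q : CochainComplex A ℤ) (η : N ⟶ Q.X 0),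
    IsProperYCoresolution 𝒴 N Q η ∧ AugCoresRightAcyclic 𝒳 N Q η)

/-- Vanishing of the relative Ext group `Ext⁎ⁱ(M, N)`: the `i`-th cohomology of
`Hom(P, N)` vanishes for every proper `𝒳`-resolution `P` of `M`. -/
def ExtStarVanish (𝒳 : Set A) (i : ℕ) (M N : A) : Prop :=
  ∀ (P : CochainComplex A ℤ) (ε : P.X 0 ⟶ M), IsProperXResolution 𝒳 M P ε →
    ∀ h : P.X (-(i : ℤ)) ⟶ N, P.d (-(i : ℤ) - 1) (-(i : ℤ)) ≫ h = 0 →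
      ∃ k : P.X (-(i : ℤ) + 1) ⟶ N, P.d (-(i : ℤ)) (-(i : ℤ) + 1) ≫ k = h

/-- A cotorsion pair relative to the balanced pair `(𝒳, 𝒴)`, defined by
orthogonality with respect to `Ext⁎¹`. -/
def IsRelCotorsionPair (𝒳 𝒞 𝒟 : Set A) : Prop :=
  (∀ C : A, C ∈ 𝒞 ↔ ∀ D ∈ 𝒟, ExtStarVanish 𝒳 1 C D) ∧
  (∀ D : A, D ∈ 𝒟 ↔ ∀ C ∈ 𝒞, ExtStarVanish 𝒳 1 C D)

/-- `𝒳` is admissible: every right `𝒳`-approximation is an epimorphism. -/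
def XAdmissible (𝒳 : Set A) : Prop :=
  ∀ (X M : A) (f : X ⟶ M), IsRightApprox 𝒳 f → Epi f

/-- `𝒴` is coadmissible: every left `𝒴`-approximation is a monomorphism. -/
def YCoadmissible (𝒴 : Set A) : Prop :=
  ∀ (M Y : A) (f : M ⟶ Y), IsLeftApprox 𝒴 f → Mono f

/-- `𝒳`-resolution dimension of `M` is at most `n`. -/
def XResdimLE (𝒳 : Set A) (n : ℕ) (M : A) : Prop :=
  ∃ (P : CochainComplex A ℤ) (ε : P.X 0 ⟶ M),
    IsProperXResolution 𝒳 M P ε ∧ ∀ i : ℤ, i < -(n : ℤ) → IsZero (P.X i)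

/-- `𝒴`-coresolution dimension of `N` is at most `n`. -/
def YCoresdimLE (𝒴 : Set A) (n : ℕ) (N : A) : Prop :=
  ∃ (Q : CochainComplex A ℤ) (η : N ⟶ Q.X 0),
    IsProperYCoresolution 𝒴 N Q η ∧ ∀ i : ℤ, (n : ℤ) < i → IsZero (Q.X i)


namespace Stmt11

variable {A : Type u} [Category.{v} A] [Abelian A]
variable {𝒳 𝒴 𝒞 𝒟 : Set A}

/-- Existence of an epi right 𝒳-approximation. -/
lemma epiApprox (hbp : IsBalancedPair 𝒳 𝒴) (hadm : XAdmissible 𝒳) (T : A) :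
    ∃ (X : A) (e : X ⟶ T), X ∈ 𝒳 ∧ Epi e := by
  obtain ⟨X, e, he⟩ := hbp.1 T
  exact ⟨X, e, he.1, hadm _ _ _ he⟩

/-- Descend a map along an epi, through a mono. -/
lemma descend_of_epi {T T₁ Z W : A} (τ : T₁ ⟶ T) [Epi τ] (u : T₁ ⟶ Z) (m : Z ⟶ W) [Mono m]
    (t : T ⟶ W) (h : u ≫ m = τ ≫ t) : ∃ w : T ⟶ Z, w ≫ m = t ∧ τ ≫ w = u := by
  have h0 : kernel.ι τ ≫ u = 0 := by
    have : (kernel.ι τ ≫ u) ≫ m = 0 := by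
      rw [Category.assoc, h, ← Category.assoc, kernel.condition, zero_comp]
    exact (cancel_mono m).1 (by simpa using this)
  refine ⟨Abelian.epiDesc τ u h0, ?_, Abelian.comp_epiDesc τ u h0⟩
  have := Abelian.comp_epiDesc τ u h0
  rw [← cancel_epi τ, ← Category.assoc, this, h]

/-- Relative exactness upgrade: if maps from 𝒳 with `· ≫ g = 0` factor through `d'`,
then any map with `· ≫ g = 0` factors after passing to an epi cover. -/
lemma relFactor (hbp : IsBalancedPair 𝒳 𝒴) (hadm : XAdmissible 𝒳)
    {A' B Z : A} (d' : A' ⟶ B) (g : B ⟶ Z)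
    (hcond : ∀ X ∈ 𝒳, ∀ h : X ⟶ B, h ≫ g = 0 → ∃ k : X ⟶ A', k ≫ d' = h)
    {T : A} (z : T ⟶ B) (hz : z ≫ g = 0) :
    ∃ (T₁ : A) (τ : T₁ ⟶ T) (_ : Epi τ) (r : T₁ ⟶ A'), r ≫ d' = τ ≫ z := by
  obtain ⟨X₀, e, hX₀, he⟩ := epiApprox hbp hadm (kernel g)
  obtain ⟨v, hv⟩ := hcond X₀ hX₀ (e ≫ kernel.ι g) (by rw [Category.assoc, kernel.condition, comp_zero])
  have hz' : (kernel.lift g z hz) ≫ kernel.ι g = z := kernel.lift_ι g z hz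
  -- pullback of (kernel.lift g z hz : T ⟶ kernel g) and (e : X₀ ⟶ kernel g)
  haveI : Epi e := he
  refine ⟨pullback (kernel.lift g z hz) e, pullback.fst _ _, Abelian.epi_pullback_of_epi_g _ _,
    pullback.snd _ _ ≫ v, ?_⟩
  rw [Category.assoc, hv, ← Category.assoc, ← pullback.condition, Category.assoc, hz']

/-- Factor a map killed by `cokernel.π φ₀` through `φ₀` after an epi cover. -/
lemma cokerFactor {Ω U : A} (φ₀ : Ω ⟶ U) {T : A} (x : T ⟶ U)
    (hx : x ≫ cokernel.π φ₀ = 0) :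
    ∃ (T₁ : A) (τ : T₁ ⟶ T) (_ : Epi τ) (m : T₁ ⟶ Ω), m ≫ φ₀ = τ ≫ x := by
  let x₁ : T ⟶ Abelian.image φ₀ := kernel.lift (cokernel.π φ₀) x hx
  have hx₁ : x₁ ≫ Abelian.image.ι φ₀ = x := kernel.lift_ι _ _ _
  haveI : Epi (Abelian.factorThruImage φ₀) := inferInstance
  refine ⟨pullback x₁ (Abelian.factorThruImage φ₀), pullback.fst _ _,
    Abelian.epi_pullback_of_epi_g _ _, pullback.snd _ _, ?_⟩
  have : pullback.snd x₁ (Abelian.factorThruImage φ₀) ≫ φ₀ =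
      pullback.snd x₁ (Abelian.factorThruImage φ₀) ≫ Abelian.factorThruImage φ₀ ≫ Abelian.image.ι φ₀ := by
    rw [Abelian.image.fac]
  rw [this, ← Category.assoc, ← pullback.condition, Category.assoc, hx₁]

/-- Factor through a mono with zero composite to its cokernel. -/
lemma monoFactor {A₀ B : A} (η : A₀ ⟶ B) [Mono η] {T : A} (z : T ⟶ B)
    (hz : z ≫ cokernel.π η = 0) : ∃ w : T ⟶ A₀, w ≫ η = z := by
  obtain ⟨T₁, τ, hτ, m, hm⟩ := cokerFactor η z hz
  haveI := hτ
  obtain ⟨w, hw, -⟩ := descend_of_epi τ m η z hm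
  exact ⟨w, hw⟩

end Stmt11


section Res

variable {A : Type u} [Category.{v} A] [Abelian A]
variable {𝒳 𝒴 𝒞 𝒟 : Set A}
variable {M : A} {P : CochainComplex A ℤ} {ε : P.X 0 ⟶ M}

namespace Stmt11

/-- `ε` of a proper resolution is a right `𝒳`-approximation. -/
lemma res_approx (hP : IsProperXResolution 𝒳 M P ε) : IsRightApprox 𝒳 ε :=
  ⟨hP.2.1 0 le_rfl, fun X hX g => (hP.2.2.2 X hX).1 g⟩

lemma res_eps_epi (hadm : XAdmissible 𝒳) (hP : IsProperXResolution 𝒳 M P ε) : Epi ε :=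
  hadm _ _ _ (res_approx hP)

/-- normalized degree `-1` extension condition -/
lemma res_ext1 (hP : IsProperXResolution 𝒳 M P ε) :
    ∀ X ∈ 𝒳, ∀ h : X ⟶ P.X (-1), h ≫ P.d (-1) 0 = 0 → ∃ k : X ⟶ P.X (-2), k ≫ P.d (-2) (-1) = h := by
  intro X hX h hh
  have h2 := (hP.2.2.2 X hX).2.2 (-1) (by norm_num) h
    (by rw [show (-1 : ℤ) + 1 = 0 by norm_num]; exact hh)
  rwa [show (-1 : ℤ) - 1 = -2 by norm_num] at h2

/-- normalized degree `-2` extension condition -/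
lemma res_ext2 (hP : IsProperXResolution 𝒳 M P ε) :
    ∀ X ∈ 𝒳, ∀ h : X ⟶ P.X (-2), h ≫ P.d (-2) (-1) = 0 → ∃ k : X ⟶ P.X (-3), k ≫ P.d (-3) (-2) = h := by
  intro X hX h hh
  have h2 := (hP.2.2.2 X hX).2.2 (-2) (by norm_num) h
    (by rw [show (-2 : ℤ) + 1 = -1 by norm_num]; exact hh)
  rwa [show (-2 : ℤ) - 1 = -3 by norm_num] at h2

/-- relative exactness at degree 0, for arbitrary sources, up to epi cover -/
lemma res_rel0 (hbp : IsBalancedPair 𝒳 𝒴) (hadm : XAdmissible 𝒳)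
    (hP : IsProperXResolution 𝒳 M P ε) {T : A} (z : T ⟶ P.X 0) (hz : z ≫ ε = 0) :
    ∃ (T₁ : A) (τ : T₁ ⟶ T) (_ : Epi τ) (r : T₁ ⟶ P.X (-1)), r ≫ P.d (-1) 0 = τ ≫ z :=
  relFactor hbp hadm (P.d (-1) 0) ε (fun X hX h hh => (hP.2.2.2 X hX).2.1 h hh) z hz

/-- relative exactness at degree -1, for arbitrary sources, up to epi cover -/
lemma res_rel1 (hbp : IsBalancedPair 𝒳 𝒴) (hadm : XAdmissible 𝒳)
    (hP : IsProperXResolution 𝒳 M P ε) {T : A} (z : T ⟶ P.X (-1)) (hz : z ≫ P.d (-1) 0 = 0) :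
    ∃ (T₁ : A) (τ : T₁ ⟶ T) (_ : Epi τ) (r : T₁ ⟶ P.X (-2)), r ≫ P.d (-2) (-1) = τ ≫ z :=
  relFactor hbp hadm (P.d (-2) (-1)) (P.d (-1) 0) (res_ext1 hP) z hz

/-- cokernel property of `ε` -/
lemma res_desc (hbp : IsBalancedPair 𝒳 𝒴) (hadm : XAdmissible 𝒳)
    (hP : IsProperXResolution 𝒳 M P ε) {Z : A} (z : P.X 0 ⟶ Z) (hz : P.d (-1) 0 ≫ z = 0) :
    ∃ u : M ⟶ Z, ε ≫ u = z := by
  obtain ⟨T₁, τ, hτ, r, hr⟩ := res_rel0 hbp hadm hP (kernel.ι ε) (kernel.condition ε)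
  haveI := hτ
  have h0 : kernel.ι ε ≫ z = 0 := by
    rw [← cancel_epi τ, ← Category.assoc, ← hr, Category.assoc, hz, comp_zero, comp_zero]
  haveI := res_eps_epi hadm hP
  exact ⟨Abelian.epiDesc ε z h0, Abelian.comp_epiDesc ε z h0⟩

/-- normalized Ext¹ vanishing -/
lemma ext_one {M N : A} (h : ExtStarVanish 𝒳 1 M N) {P : CochainComplex A ℤ} {ε : P.X 0 ⟶ M}
    (hP : IsProperXResolution 𝒳 M P ε) :
    ∀ w : P.X (-1) ⟶ N, P.d (-2) (-1) ≫ w = 0 → ∃ k : P.X 0 ⟶ N, P.d (-1) 0 ≫ k = w := by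
  have h' := h P ε hP
  norm_num at h'
  exact h'

/-- normalized Ext² vanishing -/
lemma ext_two {M N : A} (h : ExtStarVanish 𝒳 2 M N) {P : CochainComplex A ℤ} {ε : P.X 0 ⟶ M}
    (hP : IsProperXResolution 𝒳 M P ε) :
    ∀ w : P.X (-2) ⟶ N, P.d (-3) (-2) ≫ w = 0 → ∃ k : P.X (-1) ⟶ N, P.d (-2) (-1) ≫ k = w := by
  have h' := h P ε hP
  norm_num at h'
  exact h'

end Stmt11

end Res


namespace Stmt11

variable {A : Type u} [Category.{v} A] [Abelian A]
variable {𝒳 𝒴 𝒞 𝒟 : Set A}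

/-- A short exact sequence which is `Hom(𝒳,-)`-exact (proper). -/
structure PSES (𝒳 : Set A) (A₀ B₀ C₀ : A) where
  f : A₀ ⟶ B₀
  g : B₀ ⟶ C₀
  zero : f ≫ g = 0
  mf : Mono f
  eg : Epi g
  exa : ∀ {T : A} (t : T ⟶ B₀), t ≫ g = 0 → ∃ u : T ⟶ A₀, u ≫ f = t
  liftX : ∀ X ∈ 𝒳, ∀ x : X ⟶ C₀, ∃ w : X ⟶ B₀, w ≫ g = x

namespace PSES

variable {A₀ B₀ C₀ : A} (S : PSES 𝒳 A₀ B₀ C₀)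

attribute [instance] PSES.mf PSES.eg

/-- cokernel property -/
lemma desc {Z : A} (t : B₀ ⟶ Z) (ht : S.f ≫ t = 0) : ∃ u : C₀ ⟶ Z, S.g ≫ u = t := by
  obtain ⟨u₀, hu₀⟩ := S.exa (kernel.ι S.g) (kernel.condition _)
  have h0 : kernel.ι S.g ≫ t = 0 := by rw [← hu₀, Category.assoc, ht, comp_zero]
  exact ⟨Abelian.epiDesc S.g t h0, Abelian.comp_epiDesc S.g t h0⟩

def Split : Prop := ∃ σ : C₀ ⟶ B₀, σ ≫ S.g = 𝟙 C₀

lemma split_of_retr (r : B₀ ⟶ A₀) (hr : S.f ≫ r = 𝟙 A₀) : S.Split := by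
  have h1 : S.f ≫ (𝟙 B₀ - r ≫ S.f) = 0 := by
    simp only [Preadditive.comp_sub, Category.comp_id, ← Category.assoc, hr, Category.id_comp,
      sub_self]
  obtain ⟨u, hu⟩ := S.desc (𝟙 B₀ - r ≫ S.f) h1
  refine ⟨u, ?_⟩
  have : S.g ≫ u ≫ S.g = S.g ≫ 𝟙 C₀ := by
    rw [← Category.assoc, hu, Preadditive.sub_comp, Category.id_comp, Category.assoc, S.zero,
      comp_zero, sub_zero, Category.comp_id]
  exact (cancel_epi S.g).1 this

lemma retr_of_split (h : S.Split) : ∃ r : B₀ ⟶ A₀, S.f ≫ r = 𝟙 A₀ := by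
  obtain ⟨σ, hσ⟩ := h
  have h1 : (𝟙 B₀ - S.g ≫ σ) ≫ S.g = 0 := by
    simp only [Preadditive.sub_comp, Category.id_comp, Category.assoc, hσ, Category.comp_id,
      sub_self]
  obtain ⟨r, hr⟩ := S.exa _ h1
  refine ⟨r, ?_⟩
  have : (S.f ≫ r) ≫ S.f = 𝟙 A₀ ≫ S.f := by
    rw [Category.assoc, hr, Preadditive.comp_sub, Category.comp_id, ← Category.assoc, S.zero,
      zero_comp, sub_zero, Category.id_comp]
  exact (cancel_mono S.f).1 this

/-- split gives lifting of arbitrary maps -/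
lemma lift_of_split (h : S.Split) {T : A} (x : T ⟶ C₀) : ∃ w : T ⟶ B₀, w ≫ S.g = x := by
  obtain ⟨σ, hσ⟩ := h
  exact ⟨x ≫ σ, by rw [Category.assoc, hσ, Category.comp_id]⟩

end PSES

/-- L2: relative Ext¹-vanishing implies proper sequences split. -/
lemma split_of_ext (hbp : IsBalancedPair 𝒳 𝒴) (hadm : XAdmissible 𝒳)
    {D₀ W T : A} (S : PSES 𝒳 D₀ W T) (hext : ExtStarVanish 𝒳 1 T D₀) : S.Split := by
  obtain ⟨P, ε, hP, -⟩ := hbp.2.2.1 T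
  obtain ⟨ε', hε'⟩ := S.liftX _ (hP.2.1 0 le_rfl) ε
  have h1 : (P.d (-1) 0 ≫ ε') ≫ S.g = 0 := by
    rw [Category.assoc, hε', hP.2.2.1]
  obtain ⟨w, hw⟩ := S.exa _ h1
  have hcocycle : P.d (-2) (-1) ≫ w = 0 := by
    haveI := S.mf
    rw [← cancel_mono S.f, Category.assoc, hw, zero_comp, ← Category.assoc,
      HomologicalComplex.d_comp_d, zero_comp]
  obtain ⟨k, hk⟩ := ext_one hext hP w hcocycle
  have h2 : P.d (-1) 0 ≫ (ε' - k ≫ S.f) = 0 := by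
    rw [Preadditive.comp_sub, ← Category.assoc, hk, hw, sub_self]
  obtain ⟨σ, hσ⟩ := res_desc hbp hadm hP _ h2
  refine ⟨σ, ?_⟩
  haveI := res_eps_epi hadm hP
  have : ε ≫ σ ≫ S.g = ε ≫ 𝟙 T := by
    rw [← Category.assoc, hσ, Preadditive.sub_comp, Category.assoc, S.zero, comp_zero, sub_zero,
      hε', Category.comp_id]
  exact (cancel_epi ε).1 this

/-- L4: a proper sequence starting with an object of `𝒴` splits. -/
lemma split_of_mem_Y (hbp : IsBalancedPair 𝒳 𝒴) (hadm : XAdmissible 𝒳)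
    {Y W T : A} (hY : Y ∈ 𝒴) (S : PSES 𝒳 Y W T) : S.Split := by
  obtain ⟨P, ε, hP, hacy⟩ := hbp.2.2.1 T
  obtain ⟨ε', hε'⟩ := S.liftX _ (hP.2.1 0 le_rfl) ε
  have h1 : (P.d (-1) 0 ≫ ε') ≫ S.g = 0 := by rw [Category.assoc, hε', hP.2.2.1]
  obtain ⟨w, hw⟩ := S.exa _ h1
  have hcocycle : P.d (-2) (-1) ≫ w = 0 := by
    haveI := S.mf
    rw [← cancel_mono S.f, Category.assoc, hw, zero_comp, ← Category.assoc,
      HomologicalComplex.d_comp_d, zero_comp]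
  -- use left 𝒴-acyclicity at degree -1
  have hk' := (hacy Y hY).2.2 (-1) (by norm_num) w (by
    rw [show (-1 : ℤ) - 1 = -2 by norm_num]; exact hcocycle)
  rw [show (-1 : ℤ) + 1 = 0 by norm_num] at hk'
  obtain ⟨k, hk⟩ := hk'
  have h2 : P.d (-1) 0 ≫ (ε' - k ≫ S.f) = 0 := by
    rw [Preadditive.comp_sub, ← Category.assoc, hk, hw, sub_self]
  obtain ⟨σ, hσ⟩ := res_desc hbp hadm hP _ h2
  refine ⟨σ, ?_⟩
  haveI := res_eps_epi hadm hP
  have : ε ≫ σ ≫ S.g = ε ≫ 𝟙 T := by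
    rw [← Category.assoc, hσ, Preadditive.sub_comp, Category.assoc, S.zero, comp_zero, sub_zero,
      hε', Category.comp_id]
  exact (cancel_epi ε).1 this

end Stmt11


namespace Stmt11

variable {A : Type u} [Category.{v} A] [Abelian A]
variable {𝒳 𝒴 𝒞 𝒟 : Set A}

lemma biprod_decomp {X Y Z : A} (n : Z ⟶ X ⊞ Y) :
    n = (n ≫ biprod.fst) ≫ biprod.inl + (n ≫ biprod.snd) ≫ biprod.inr := by
  conv_lhs => rw [← Category.comp_id n, ← biprod.total, Preadditive.comp_add,
    ← Category.assoc, ← Category.assoc]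

/-- L3: if all proper sequences `0 → D → W → T → 0` split, then `Ext¹(T,D) = 0`. -/
lemma ext_of_split (hbp : IsBalancedPair 𝒳 𝒴) (hadm : XAdmissible 𝒳) {T D : A}
    (hsplit : ∀ (W : A) (S : PSES 𝒳 D W T), S.Split) : ExtStarVanish 𝒳 1 T D := by
  intro P ε hP h hh
  show ∃ k : P.X 0 ⟶ D, P.d (-1) 0 ≫ k = h
  have hh : P.d (-2) (-1) ≫ h = 0 := hh
  set Ω := cokernel (P.d (-2) (-1)) with hΩ
  set cΩ : P.X (-1) ⟶ Ω := cokernel.π _ with hcΩ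
  set hb : Ω ⟶ D := cokernel.desc _ h hh with hhb
  have hhb' : cΩ ≫ hb = h := cokernel.π_desc _ _ _
  set db : Ω ⟶ P.X 0 := cokernel.desc _ (P.d (-1) 0) (P.d_comp_d _ _ _) with hdb
  have hdb' : cΩ ≫ db = P.d (-1) 0 := cokernel.π_desc _ _ _
  haveI : Mono db := by
    apply Preadditive.mono_of_cancel_zero
    intro T' t ht
    have hpb := pullback.condition (f := t) (g := cΩ)
    haveI : Epi (pullback.fst t cΩ) := Abelian.epi_pullback_of_epi_g _ _
    have h1 : pullback.snd t cΩ ≫ P.d (-1) 0 = 0 := by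
      rw [← hdb', ← Category.assoc, ← hpb, Category.assoc, ht, comp_zero]
    obtain ⟨T₂, τ₂, hτ₂, r, hr⟩ := res_rel1 hbp hadm hP _ h1
    haveI := hτ₂
    have h2 : τ₂ ≫ pullback.snd t cΩ ≫ cΩ = 0 := by
      rw [← Category.assoc, ← hr, Category.assoc, cokernel.condition, comp_zero]
    rw [← hpb] at h2
    have h3 : (τ₂ ≫ pullback.fst t cΩ) ≫ t = 0 := by
      rw [Category.assoc]; rw [← Category.assoc] at h2; rw [Category.assoc] at h2; exact h2
    exact zero_of_epi_comp _ h3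
  set φ₀ : Ω ⟶ P.X 0 ⊞ D := biprod.lift db (-hb) with hφ₀def
  set W := cokernel φ₀ with hW
  set π₀ : P.X 0 ⊞ D ⟶ W := cokernel.π _ with hπ₀
  set jD : D ⟶ W := biprod.inr ≫ π₀ with hjD
  set θ : P.X 0 ⟶ W := biprod.inl ≫ π₀ with hθ
  have hφ₀ : φ₀ = db ≫ biprod.inl - hb ≫ biprod.inr := by
    apply biprod.hom_ext <;> simp [hφ₀def]
  have hrel : db ≫ θ = hb ≫ jD := by
    have h0 : (db ≫ biprod.inl - hb ≫ biprod.inr) ≫ π₀ = 0 := by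
      rw [← hφ₀]; exact cokernel.condition φ₀
    rw [Preadditive.sub_comp, sub_eq_zero] at h0
    simpa only [hθ, hjD, Category.assoc] using h0
  have hde : db ≫ ε = 0 := by
    rw [← cancel_epi cΩ, ← Category.assoc, hdb', hP.2.2.1, comp_zero]
  have hϖc : φ₀ ≫ biprod.desc ε (0 : D ⟶ T) = 0 := by
    rw [hφ₀, Preadditive.sub_comp, Category.assoc, Category.assoc, biprod.inl_desc,
      biprod.inr_desc, comp_zero, sub_zero, hde]
  set ϖ : W ⟶ T := cokernel.desc φ₀ (biprod.desc ε 0) hϖc with hϖ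
  have hθϖ : θ ≫ ϖ = ε := by rw [hθ, Category.assoc, hϖ, cokernel.π_desc, biprod.inl_desc]
  have hjϖ : jD ≫ ϖ = 0 := by rw [hjD, Category.assoc, hϖ, cokernel.π_desc, biprod.inr_desc]
  haveI hmj : Mono jD := by
    apply Preadditive.mono_of_cancel_zero
    intro T' t ht
    have ht' : (t ≫ biprod.inr) ≫ π₀ = 0 := by
      rw [Category.assoc]; exact ht
    obtain ⟨T₁, τ, hτ, m, hm⟩ := cokerFactor φ₀ _ ht'
    haveI := hτ
    have h1 : m ≫ db = 0 := by
      have h2 := congrArg (· ≫ biprod.fst) hm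
      simpa [hφ₀def] using h2
    have h2 : m = 0 := by rwa [← cancel_mono db, zero_comp]
    have h3 : τ ≫ t = 0 := by
      have h4 : (τ ≫ t ≫ (biprod.inr : D ⟶ P.X 0 ⊞ D)) ≫ biprod.snd = 0 := by
        rw [← hm, h2, zero_comp, zero_comp]
      simpa using h4
    exact zero_of_epi_comp τ h3
  haveI hep : Epi ϖ := by
    haveI : Epi ε := res_eps_epi hadm hP
    haveI : Epi (θ ≫ ϖ) := by rw [hθϖ]; infer_instance
    exact epi_of_epi θ ϖ
  have hexa : ∀ {T' : A} (t : T' ⟶ W), t ≫ ϖ = 0 → ∃ u : T' ⟶ D, u ≫ jD = t := by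
    intro T' t ht
    have hpb := pullback.condition (f := t) (g := π₀)
    haveI : Epi (pullback.fst t π₀) := Abelian.epi_pullback_of_epi_g _ _
    set τ := pullback.fst t π₀ with hτdef
    set n := pullback.snd t π₀ with hndef
    have hn : n ≫ π₀ = τ ≫ t := hpb.symm
    have h1 : (n ≫ biprod.fst) ≫ ε = 0 := by
      have h5 : n ≫ π₀ ≫ ϖ = 0 := by
        rw [← Category.assoc, hn, Category.assoc, ht, comp_zero]
      rw [hϖ, cokernel.π_desc] at h5
      have hd : n ≫ biprod.desc ε (0 : D ⟶ T) = (n ≫ biprod.fst) ≫ ε := by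
        conv_lhs => rw [biprod_decomp n]
        rw [Preadditive.add_comp,
          Category.assoc (n ≫ biprod.fst) biprod.inl (biprod.desc ε 0),
          Category.assoc (n ≫ biprod.snd) biprod.inr (biprod.desc ε 0),
          biprod.inl_desc, biprod.inr_desc, comp_zero, add_zero]
      rw [hd] at h5
      exact h5
    obtain ⟨T₂, τ₂, hτ₂, r, hr⟩ := res_rel0 hbp hadm hP _ h1
    haveI := hτ₂
    set ζ : T₂ ⟶ P.X 0 ⊞ D := τ₂ ≫ n - (r ≫ cΩ) ≫ φ₀ with hζ
    have e1 : ((r ≫ cΩ) ≫ φ₀) ≫ biprod.fst = r ≫ P.d (-1) 0 := by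
      simp only [hφ₀def, Category.assoc, biprod.lift_fst]
      rw [hdb']
    have hζf : ζ ≫ biprod.fst = 0 := by
      rw [hζ, Preadditive.sub_comp, e1, hr, Category.assoc, sub_self]
    have hζd : ζ = (ζ ≫ biprod.snd) ≫ biprod.inr := by
      conv_lhs => rw [biprod_decomp ζ]
      rw [hζf, zero_comp, zero_add]
    have h2 : (ζ ≫ biprod.snd) ≫ jD = (τ₂ ≫ τ) ≫ t := by
      have e4 : (ζ ≫ biprod.snd) ≫ jD = ζ ≫ π₀ := by
        rw [hjD, ← Category.assoc _ biprod.inr π₀, ← hζd]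
      rw [e4, hζ, Preadditive.sub_comp, Category.assoc (r ≫ cΩ) φ₀ π₀, cokernel.condition,
        comp_zero, sub_zero, Category.assoc, hn, ← Category.assoc]
    haveI : Epi (τ₂ ≫ τ) := epi_comp _ _
    obtain ⟨u, hu, -⟩ := descend_of_epi (τ₂ ≫ τ) (ζ ≫ biprod.snd) jD t h2
    exact ⟨u, hu⟩
  have hlift : ∀ X ∈ 𝒳, ∀ x : X ⟶ T, ∃ w : X ⟶ W, w ≫ ϖ = x := by
    intro X hX x
    obtain ⟨x', hx'⟩ := (hP.2.2.2 X hX).1 x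
    exact ⟨x' ≫ θ, by rw [Category.assoc, hθϖ, hx']⟩
  obtain ⟨rr, hrr⟩ := PSES.retr_of_split ⟨jD, ϖ, hjϖ, hmj, hep, hexa, hlift⟩
    (hsplit W ⟨jD, ϖ, hjϖ, hmj, hep, hexa, hlift⟩)
  refine ⟨θ ≫ rr, ?_⟩
  have e2 : P.d (-1) 0 ≫ θ ≫ rr = cΩ ≫ ((db ≫ θ) ≫ rr) := by
    rw [← hdb']; simp only [Category.assoc]
  rw [e2, hrel]
  have e3 : cΩ ≫ (hb ≫ jD) ≫ rr = cΩ ≫ hb ≫ jD ≫ rr := by simp only [Category.assoc]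
  rw [e3]
  have hjr : jD ≫ rr = 𝟙 D := hrr
  rw [hjr, Category.comp_id, hhb']


end Stmt11


namespace Stmt11

variable {A : Type u} [Category.{v} A] [Abelian A]
variable {𝒳 𝒴 𝒞 𝒟 : Set A}

lemma desc_of_exa {A₀ B₀ C₀ : A} (f : A₀ ⟶ B₀) (g : B₀ ⟶ C₀) [Epi g]
    (hexa : ∀ {T : A} (t : T ⟶ B₀), t ≫ g = 0 → ∃ u : T ⟶ A₀, u ≫ f = t)
    {Z : A} (t : B₀ ⟶ Z) (ht : f ≫ t = 0) : ∃ u : C₀ ⟶ Z, g ≫ u = t := by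
  obtain ⟨u₀, hu₀⟩ := hexa (kernel.ι g) (kernel.condition _)
  have h0 : kernel.ι g ≫ t = 0 := by rw [← hu₀, Category.assoc, ht, comp_zero]
  exact ⟨Abelian.epiDesc g t h0, Abelian.comp_epiDesc g t h0⟩

lemma sec_of_retr {A₀ B₀ C₀ : A} (f : A₀ ⟶ B₀) (g : B₀ ⟶ C₀) [Epi g] (hfg : f ≫ g = 0)
    (hexa : ∀ {T : A} (t : T ⟶ B₀), t ≫ g = 0 → ∃ u : T ⟶ A₀, u ≫ f = t)
    (r : B₀ ⟶ A₀) (hr : f ≫ r = 𝟙 A₀) : ∃ σ : C₀ ⟶ B₀, σ ≫ g = 𝟙 C₀ := by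
  have h1 : f ≫ (𝟙 B₀ - r ≫ f) = 0 := by
    simp only [Preadditive.comp_sub, Category.comp_id, ← Category.assoc, hr, Category.id_comp,
      sub_self]
  obtain ⟨u, hu⟩ := desc_of_exa f g hexa (𝟙 B₀ - r ≫ f) h1
  refine ⟨u, ?_⟩
  have : g ≫ u ≫ g = g ≫ 𝟙 C₀ := by
    rw [← Category.assoc, hu, Preadditive.sub_comp, Category.id_comp, Category.assoc, hfg,
      comp_zero, sub_zero, Category.comp_id]
  exact (cancel_epi g).1 this

/-- membership in 𝒟 from splitting of proper sequences -/
lemma memD_of_split (hbp : IsBalancedPair 𝒳 𝒴) (hadm : XAdmissible 𝒳)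
    (hcp : IsRelCotorsionPair 𝒳 𝒞 𝒟) {D : A}
    (h : ∀ C₀ ∈ 𝒞, ∀ (W : A) (S : PSES 𝒳 D W C₀), S.Split) : D ∈ 𝒟 :=
  (hcp.2 D).2 fun C₀ hC₀ => ext_of_split hbp hadm fun W S => h C₀ hC₀ W S

lemma split_of_memD (hbp : IsBalancedPair 𝒳 𝒴) (hadm : XAdmissible 𝒳)
    (hcp : IsRelCotorsionPair 𝒳 𝒞 𝒟) {D C₀ W : A} (hD : D ∈ 𝒟) (hC₀ : C₀ ∈ 𝒞)
    (S : PSES 𝒳 D W C₀) : S.Split :=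
  split_of_ext hbp hadm S ((hcp.2 D).1 hD C₀ hC₀)

lemma memC_of_split (hbp : IsBalancedPair 𝒳 𝒴) (hadm : XAdmissible 𝒳)
    (hcp : IsRelCotorsionPair 𝒳 𝒞 𝒟) {C₀ : A}
    (h : ∀ D ∈ 𝒟, ∀ (W : A) (S : PSES 𝒳 D W C₀), S.Split) : C₀ ∈ 𝒞 :=
  (hcp.1 C₀).2 fun D hD => ext_of_split hbp hadm fun W S => h D hD W S

lemma split_of_memC (hbp : IsBalancedPair 𝒳 𝒴) (hadm : XAdmissible 𝒳)
    (hcp : IsRelCotorsionPair 𝒳 𝒞 𝒟) {D C₀ W : A} (hD : D ∈ 𝒟) (hC₀ : C₀ ∈ 𝒞)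
    (S : PSES 𝒳 D W C₀) : S.Split :=
  split_of_ext hbp hadm S ((hcp.1 C₀).1 hC₀ D hD)

/-- 𝒳 ⊆ 𝒞 -/
lemma X_sub_C (hbp : IsBalancedPair 𝒳 𝒴) (hadm : XAdmissible 𝒳)
    (hcp : IsRelCotorsionPair 𝒳 𝒞 𝒟) {X₀ : A} (hX₀ : X₀ ∈ 𝒳) : X₀ ∈ 𝒞 := by
  refine memC_of_split hbp hadm hcp fun D hD W S => ?_
  obtain ⟨σ, hσ⟩ := S.liftX X₀ hX₀ (𝟙 X₀)
  exact ⟨σ, hσ⟩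

/-- 𝒴 ⊆ 𝒟 -/
lemma Y_sub_D (hbp : IsBalancedPair 𝒳 𝒴) (hadm : XAdmissible 𝒳)
    (hcp : IsRelCotorsionPair 𝒳 𝒞 𝒟) {Y : A} (hY : Y ∈ 𝒴) : Y ∈ 𝒟 :=
  memD_of_split hbp hadm hcp fun C₀ _ W S => split_of_mem_Y hbp hadm hY S

/-- bundled data from a proper 𝒴-coresolution -/
lemma cores_pack (hbp : IsBalancedPair 𝒳 𝒴) (hadm : XAdmissible 𝒳) (N : A) :
    ∃ (Q₀ L : A) (η : N ⟶ Q₀) (ρ : Q₀ ⟶ L), Q₀ ∈ 𝒴 ∧ Mono η ∧ η ≫ ρ = 0 ∧ Epi ρ ∧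
      (∀ {T : A} (z : T ⟶ Q₀), z ≫ ρ = 0 → ∃ w : T ⟶ N, w ≫ η = z) ∧
      (∀ X ∈ 𝒳, ∀ x : X ⟶ L, ∃ k : X ⟶ Q₀, k ≫ ρ = x) := by
  obtain ⟨Q, η, hQ, hAug⟩ := hbp.2.2.2 N
  have hη : Mono η := by
    apply Preadditive.mono_of_cancel_zero
    intro T t ht
    obtain ⟨X₀, e, hX₀, he⟩ := epiApprox hbp hadm T
    haveI := he
    have h1 : (e ≫ t) ≫ η = 0 := by rw [Category.assoc, ht, comp_zero]
    have h2 := (hAug X₀ hX₀).1 (e ≫ t) h1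
    exact zero_of_epi_comp e h2
  haveI := hη
  refine ⟨Q.X 0, cokernel η, η, cokernel.π η, hQ.2.1 0 le_rfl, hη, cokernel.condition η,
    inferInstance, fun z hz => monoFactor η z hz, ?_⟩
  -- LiftQ
  set ρ := cokernel.π η with hρ
  set ι : cokernel η ⟶ Q.X 1 := cokernel.desc η (Q.d 0 1) hQ.2.2.1 with hι
  have hρι : ρ ≫ ι = Q.d 0 1 := cokernel.π_desc _ _ _
  haveI hιm : Mono ι := by
    apply Preadditive.mono_of_cancel_zero
    intro T t ht
    have hpb := pullback.condition (f := t) (g := ρ)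
    haveI : Epi (pullback.fst t ρ) := Abelian.epi_pullback_of_epi_g _ _
    have h1 : pullback.snd t ρ ≫ Q.d 0 1 = 0 := by
      rw [← hρι, ← Category.assoc, ← hpb, Category.assoc, ht, comp_zero]
    obtain ⟨T₂, τ₂, hτ₂, r, hr⟩ := relFactor hbp hadm η (Q.d 0 1)
      (fun X hX h hh => (hAug X hX).2.1 h hh) _ h1
    haveI := hτ₂
    have h2 : τ₂ ≫ pullback.snd t ρ ≫ ρ = 0 := by
      rw [← Category.assoc, ← hr, Category.assoc, cokernel.condition, comp_zero]
    rw [← hpb] at h2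
    have h3 : (τ₂ ≫ pullback.fst t ρ) ≫ t = 0 := by
      rw [Category.assoc]
      rw [← Category.assoc] at h2; rw [Category.assoc] at h2; exact h2
    exact zero_of_epi_comp _ h3
  intro X hX x
  have hι2 : ι ≫ Q.d 1 2 = 0 := by
    rw [← cancel_epi ρ, ← Category.assoc, hρι, HomologicalComplex.d_comp_d, comp_zero]
  have h1 : (x ≫ ι) ≫ Q.d 1 (1 + 1) = 0 := by
    show (x ≫ ι) ≫ Q.d 1 2 = 0
    rw [Category.assoc, hι2, comp_zero]
  obtain ⟨k, hk⟩ := (hAug X hX).2.2 1 (by norm_num) (x ≫ ι) h1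
  have hk' : k ≫ Q.d 0 1 = x ≫ ι := hk
  refine ⟨k, ?_⟩
  rw [← cancel_mono ι, Category.assoc, hρι, hk']

/-- SPLIT: sequence ending in 𝒳 with 𝒴-extension property splits. -/
lemma retr_of_Yext (hbp : IsBalancedPair 𝒳 𝒴) (hadm : XAdmissible 𝒳) {N U X₀ : A}
    (hX₀ : X₀ ∈ 𝒳) (f : N ⟶ U) (g : U ⟶ X₀) (hfg : f ≫ g = 0) [Mono f] [Epi g]
    (hexa : ∀ {T : A} (t : T ⟶ U), t ≫ g = 0 → ∃ u : T ⟶ N, u ≫ f = t)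
    (hYext : ∀ Y ∈ 𝒴, ∀ a : N ⟶ Y, ∃ b : U ⟶ Y, f ≫ b = a) :
    ∃ r : U ⟶ N, f ≫ r = 𝟙 N := by
  obtain ⟨Q₀, L, η, ρ, hQ₀, hηm, hηρ, hρe, hfac, hlq⟩ := cores_pack hbp hadm N
  haveI := hηm; haveI := hρe
  obtain ⟨b, hb⟩ := hYext Q₀ hQ₀ η
  have h1 : f ≫ b ≫ ρ = 0 := by rw [← Category.assoc, hb, hηρ]
  obtain ⟨c, hc⟩ := desc_of_exa f g hexa (b ≫ ρ) h1
  obtain ⟨β, hβ⟩ := hlq X₀ hX₀ c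
  have h2 : (b - g ≫ β) ≫ ρ = 0 := by
    rw [Preadditive.sub_comp, Category.assoc, hβ, hc, sub_self]
  obtain ⟨θ, hθ⟩ := hfac _ h2
  refine ⟨θ, ?_⟩
  rw [← cancel_mono η, Category.assoc, hθ, Preadditive.comp_sub, hb, ← Category.assoc, hfg,
    zero_comp, sub_zero, Category.id_comp]

/-- PROP: 𝒴-extension property implies Hom(𝒳,-)-exactness. -/
lemma liftX_of_Yext (hbp : IsBalancedPair 𝒳 𝒴) (hadm : XAdmissible 𝒳) {N B C₀ : A}
    (f : N ⟶ B) (g : B ⟶ C₀) (hfg : f ≫ g = 0) [Mono f] [Epi g]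
    (hexa : ∀ {T : A} (t : T ⟶ B), t ≫ g = 0 → ∃ u : T ⟶ N, u ≫ f = t)
    (hYext : ∀ Y ∈ 𝒴, ∀ a : N ⟶ Y, ∃ b : B ⟶ Y, f ≫ b = a) :
    ∀ X ∈ 𝒳, ∀ x : X ⟶ C₀, ∃ w : X ⟶ B, w ≫ g = x := by
  intro X hX x
  have hfU0 : f ≫ g = (0 : N ⟶ X) ≫ x := by rw [hfg, zero_comp]
  set fU : N ⟶ pullback g x := pullback.lift f 0 hfU0 with hfU
  have hfU1 : fU ≫ pullback.fst g x = f := pullback.lift_fst _ _ _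
  have hfU2 : fU ≫ pullback.snd g x = 0 := pullback.lift_snd _ _ _
  haveI : Mono fU := by
    have : Mono (fU ≫ pullback.fst g x) := by rw [hfU1]; infer_instance
    exact mono_of_mono fU (pullback.fst g x)
  haveI : Epi (pullback.snd g x) := Abelian.epi_pullback_of_epi_f _ _
  have hexa' : ∀ {T : A} (t : T ⟶ pullback g x), t ≫ pullback.snd g x = 0 →
      ∃ u : T ⟶ N, u ≫ fU = t := by
    intro T t ht
    have h1 : (t ≫ pullback.fst g x) ≫ g = 0 := by
      rw [Category.assoc, pullback.condition, ← Category.assoc, ht, zero_comp]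
    obtain ⟨u, hu⟩ := hexa _ h1
    refine ⟨u, ?_⟩
    apply pullback.hom_ext
    · rw [Category.assoc, hfU1, hu]
    · rw [Category.assoc, hfU2, comp_zero, ht]
  have hYext' : ∀ Y ∈ 𝒴, ∀ a : N ⟶ Y, ∃ b' : pullback g x ⟶ Y, fU ≫ b' = a := by
    intro Y hY a
    obtain ⟨b, hb⟩ := hYext Y hY a
    exact ⟨pullback.fst g x ≫ b, by rw [← Category.assoc, hfU1, hb]⟩
  obtain ⟨r, hr⟩ := retr_of_Yext hbp hadm hX fU (pullback.snd g x) hfU2 hexa' hYext'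
  obtain ⟨σ, hσ⟩ := sec_of_retr fU (pullback.snd g x) hfU2 hexa' r hr
  refine ⟨σ ≫ pullback.fst g x, ?_⟩
  rw [Category.assoc, pullback.condition, ← Category.assoc, hσ, Category.id_comp]

/-- L6: maps from 𝒞-objects lift through proper epis with kernel in 𝒟. -/
lemma lift_of_memC (hbp : IsBalancedPair 𝒳 𝒴) (hadm : XAdmissible 𝒳)
    (hcp : IsRelCotorsionPair 𝒳 𝒞 𝒟) {A₀ B C₀ T : A} (S : PSES 𝒳 A₀ B C₀)
    (hA : A₀ ∈ 𝒟) (hT : T ∈ 𝒞) (x : T ⟶ C₀) : ∃ w : T ⟶ B, w ≫ S.g = x := by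
  have hfU0 : S.f ≫ S.g = (0 : A₀ ⟶ T) ≫ x := by rw [S.zero, zero_comp]
  set fU : A₀ ⟶ pullback S.g x := pullback.lift S.f 0 hfU0 with hfU
  have hfU1 : fU ≫ pullback.fst S.g x = S.f := pullback.lift_fst _ _ _
  have hfU2 : fU ≫ pullback.snd S.g x = 0 := pullback.lift_snd _ _ _
  haveI : Mono fU := by
    have : Mono (fU ≫ pullback.fst S.g x) := by rw [hfU1]; exact S.mf
    exact mono_of_mono fU (pullback.fst S.g x)
  haveI : Epi S.g := S.eg
  haveI : Epi (pullback.snd S.g x) := Abelian.epi_pullback_of_epi_f _ _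
  have hexa' : ∀ {T' : A} (t : T' ⟶ pullback S.g x), t ≫ pullback.snd S.g x = 0 →
      ∃ u : T' ⟶ A₀, u ≫ fU = t := by
    intro T' t ht
    have h1 : (t ≫ pullback.fst S.g x) ≫ S.g = 0 := by
      rw [Category.assoc, pullback.condition, ← Category.assoc, ht, zero_comp]
    obtain ⟨u, hu⟩ := S.exa _ h1
    refine ⟨u, ?_⟩
    apply pullback.hom_ext
    · rw [Category.assoc, hfU1, hu]
    · rw [Category.assoc, hfU2, comp_zero, ht]
  have hlift' : ∀ X ∈ 𝒳, ∀ z : X ⟶ T, ∃ w : X ⟶ pullback S.g x, w ≫ pullback.snd S.g x = z := by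
    intro X hX z
    obtain ⟨b, hb⟩ := S.liftX X hX (z ≫ x)
    exact ⟨pullback.lift b z hb, pullback.lift_snd _ _ _⟩
  set S' : PSES 𝒳 A₀ (pullback S.g x) T :=
    ⟨fU, pullback.snd S.g x, hfU2, inferInstance, inferInstance, hexa', hlift'⟩ with hS'
  obtain ⟨σ, hσ⟩ := split_of_memC hbp hadm hcp hA hT S'
  refine ⟨σ ≫ pullback.fst S.g x, ?_⟩
  rw [Category.assoc, pullback.condition, ← Category.assoc]
  have : σ ≫ pullback.snd S.g x = 𝟙 T := hσ
  rw [this, Category.id_comp]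

end Stmt11


namespace Stmt11

variable {A : Type u} [Category.{v} A] [Abelian A]
variable {𝒳 𝒴 𝒞 𝒟 : Set A}

/-- L10: 𝒞 is closed under proper extensions. -/
lemma extClosure_C (hbp : IsBalancedPair 𝒳 𝒴) (hadm : XAdmissible 𝒳)
    (hcp : IsRelCotorsionPair 𝒳 𝒞 𝒟) {A' B' C' : A} (hA : A' ∈ 𝒞) (hC : C' ∈ 𝒞)
    (S₀ : PSES 𝒳 A' B' C') : B' ∈ 𝒞 := by
  refine memC_of_split hbp hadm hcp fun D hD W S => ?_
  haveI := S.mf; haveI := S.eg; haveI := S₀.mf; haveI := S₀.eg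
  -- Step 1: a map sA : A' ⟶ W lifting S₀.f through S.g
  have hc1 : S.f ≫ S.g = (0 : D ⟶ A') ≫ S₀.f := by rw [S.zero, zero_comp]
  have sA_ex : ∃ sA : A' ⟶ W, sA ≫ S.g = S₀.f := by
    set fW : D ⟶ pullback S.g S₀.f := pullback.lift S.f 0 hc1 with hfW
    have hfW1 : fW ≫ pullback.fst S.g S₀.f = S.f := pullback.lift_fst _ _ _
    have hfW2 : fW ≫ pullback.snd S.g S₀.f = 0 := pullback.lift_snd _ _ _
    haveI : Mono fW := by
      have : Mono (fW ≫ pullback.fst S.g S₀.f) := by rw [hfW1]; exact S.mf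
      exact mono_of_mono fW (pullback.fst S.g S₀.f)
    haveI : Epi (pullback.snd S.g S₀.f) := Abelian.epi_pullback_of_epi_f _ _
    have hexa' : ∀ {T' : A} (t : T' ⟶ pullback S.g S₀.f), t ≫ pullback.snd S.g S₀.f = 0 →
        ∃ u : T' ⟶ D, u ≫ fW = t := by
      intro T' t ht
      have h1 : (t ≫ pullback.fst S.g S₀.f) ≫ S.g = 0 := by
        rw [Category.assoc, pullback.condition, ← Category.assoc, ht, zero_comp]
      obtain ⟨u, hu⟩ := S.exa _ h1
      refine ⟨u, ?_⟩
      apply pullback.hom_ext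
      · rw [Category.assoc, hfW1, hu]
      · rw [Category.assoc, hfW2, comp_zero, ht]
    have hlift' : ∀ X ∈ 𝒳, ∀ z : X ⟶ A',
        ∃ w : X ⟶ pullback S.g S₀.f, w ≫ pullback.snd S.g S₀.f = z := by
      intro X hX z
      obtain ⟨b, hb⟩ := S.liftX X hX (z ≫ S₀.f)
      exact ⟨pullback.lift b z hb, pullback.lift_snd _ _ _⟩
    obtain ⟨σ, hσ⟩ := split_of_memC hbp hadm hcp hD hA
      ⟨fW, pullback.snd S.g S₀.f, hfW2, inferInstance, inferInstance, hexa', hlift'⟩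
    refine ⟨σ ≫ pullback.fst S.g S₀.f, ?_⟩
    rw [Category.assoc, pullback.condition, ← Category.assoc]
    have hσ' : σ ≫ pullback.snd S.g S₀.f = 𝟙 A' := hσ
    rw [hσ', Category.id_comp]
  obtain ⟨sA, hsA⟩ := sA_ex
  haveI : Mono sA := by
    have : Mono (sA ≫ S.g) := by rw [hsA]; exact S₀.mf
    exact mono_of_mono sA S.g
  -- Step 2: the quotient sequence
  set π : W ⟶ cokernel sA := cokernel.π sA with hπdef
  set jD2 : D ⟶ cokernel sA := S.f ≫ π with hjD2
  haveI : Mono jD2 := by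
    apply Preadditive.mono_of_cancel_zero
    intro T t ht
    have h1 : (t ≫ S.f) ≫ cokernel.π sA = 0 := by
      rw [Category.assoc]; exact ht
    obtain ⟨u, hu⟩ := monoFactor sA (t ≫ S.f) h1
    have h2 : u ≫ S₀.f = 0 := by
      rw [← hsA, ← Category.assoc, hu, Category.assoc, S.zero, comp_zero]
    have h3 : u = 0 := by rwa [← cancel_mono S₀.f, zero_comp]
    have h4 : t ≫ S.f = 0 := by rw [← hu, h3, zero_comp]
    rwa [← cancel_mono S.f, zero_comp]
  have hdesc0 : sA ≫ S.g ≫ S₀.g = 0 := by rw [← Category.assoc, hsA, S₀.zero]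
  set h'' : cokernel sA ⟶ C' := cokernel.desc sA (S.g ≫ S₀.g) hdesc0 with hh''
  have hπh : π ≫ h'' = S.g ≫ S₀.g := cokernel.π_desc _ _ _
  haveI : Epi h'' := by
    haveI : Epi (S.g ≫ S₀.g) := epi_comp _ _
    haveI : Epi (π ≫ h'') := by rw [hπh]; infer_instance
    exact epi_of_epi π h''
  have hzero'' : jD2 ≫ h'' = 0 := by
    rw [hjD2, Category.assoc, hπh, ← Category.assoc, S.zero, zero_comp]
  have hexa'' : ∀ {T : A} (t : T ⟶ cokernel sA), t ≫ h'' = 0 → ∃ u : T ⟶ D, u ≫ jD2 = t := by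
    intro T t ht
    have hpb := pullback.condition (f := t) (g := π)
    haveI : Epi (pullback.fst t π) := Abelian.epi_pullback_of_epi_g _ _
    set τ := pullback.fst t π
    set n := pullback.snd t π
    have hn : n ≫ π = τ ≫ t := hpb.symm
    have h1 : (n ≫ S.g) ≫ S₀.g = 0 := by
      have : n ≫ π ≫ h'' = 0 := by
        rw [← Category.assoc, hn, Category.assoc, ht, comp_zero]
      rw [hπh] at this
      rw [Category.assoc]; exact this
    obtain ⟨m, hm⟩ := S₀.exa _ h1
    have h2 : (n - m ≫ sA) ≫ S.g = 0 := by
      rw [Preadditive.sub_comp, Category.assoc, hsA, hm, sub_self]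
    obtain ⟨u', hu'⟩ := S.exa _ h2
    have h3 : u' ≫ jD2 = τ ≫ t := by
      rw [hjD2, ← Category.assoc, hu', Preadditive.sub_comp, Category.assoc,
        cokernel.condition, comp_zero, sub_zero, hn]
    obtain ⟨u, hu, -⟩ := descend_of_epi τ u' jD2 t h3
    exact ⟨u, hu⟩
  have hlift'' : ∀ X ∈ 𝒳, ∀ x : X ⟶ C', ∃ w : X ⟶ cokernel sA, w ≫ h'' = x := by
    intro X hX x
    obtain ⟨b, hb⟩ := S₀.liftX X hX x
    obtain ⟨w, hw⟩ := S.liftX X hX b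
    refine ⟨w ≫ π, ?_⟩
    rw [Category.assoc, hπh, ← Category.assoc, hw, hb]
  obtain ⟨σ'', hσ''⟩ := split_of_memC hbp hadm hcp hD hC
    ⟨jD2, h'', hzero'', inferInstance, inferInstance, hexa'', hlift''⟩
  have hσ''' : σ'' ≫ h'' = 𝟙 C' := hσ''
  -- Step 3: the comparison map α and the section of S.g
  haveI : Epi π := inferInstance
  haveI : Epi (pullback.snd π σ'') := Abelian.epi_pullback_of_epi_f _ _
  set pW := pullback.fst π σ'' with hpW
  set pC := pullback.snd π σ'' with hpC
  have hpbc : pW ≫ π = pC ≫ σ'' := pullback.condition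
  set α : pullback π σ'' ⟶ B' := pW ≫ S.g with hα
  have ha₀c : sA ≫ π = (0 : A' ⟶ C') ≫ σ'' := by
    rw [cokernel.condition, zero_comp]
  set a₀ : A' ⟶ pullback π σ'' := pullback.lift sA 0 ha₀c with ha₀
  have ha₀1 : a₀ ≫ pW = sA := pullback.lift_fst _ _ _
  have ha₀2 : a₀ ≫ pC = 0 := pullback.lift_snd _ _ _
  have hpbc' : ∀ {Z : A} (w : cokernel sA ⟶ Z), pW ≫ π ≫ w = pC ≫ σ'' ≫ w := by
    intro Z w
    rw [← Category.assoc, hpbc, Category.assoc]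
  haveI : Epi α := by
    apply Preadditive.epi_of_cancel_zero
    intro Z c hc
    have e1 : a₀ ≫ α ≫ c = S₀.f ≫ c := by
      rw [hα, ← Category.assoc, ← Category.assoc, ha₀1, hsA]
    have h1 : S₀.f ≫ c = 0 := by rw [← e1, hc, comp_zero]
    obtain ⟨cb, hcb⟩ := desc_of_exa S₀.f S₀.g (fun t ht => S₀.exa t ht) c h1
    have e2 : π ≫ h'' ≫ cb = S.g ≫ c := by
      rw [← Category.assoc, hπh, Category.assoc, hcb]
    have h2 : pC ≫ cb = 0 := by
      have e3 : pC ≫ cb = pW ≫ π ≫ h'' ≫ cb := by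
        rw [hpbc', ← Category.assoc σ'' h'' cb, hσ''', Category.id_comp]
      rw [e3, e2, ← Category.assoc, ← hα, hc]
    have h3 : cb = 0 := zero_of_epi_comp pC h2
    rw [← hcb, h3, comp_zero]
  haveI : Mono α := by
    apply Preadditive.mono_of_cancel_zero
    intro T k hk
    have h1 : (k ≫ pW) ≫ S.g = 0 := by rw [Category.assoc, ← hα, hk]
    obtain ⟨k₁, hk₁⟩ := S.exa _ h1
    have h2 : k ≫ pC = 0 := by
      have e0 : k ≫ pC = k ≫ pC ≫ σ'' ≫ h'' := by rw [hσ''', Category.comp_id]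
      rw [e0, ← hpbc', hπh, ← Category.assoc k pW, ← hk₁, Category.assoc k₁,
        ← Category.assoc S.f S.g, S.zero, zero_comp, comp_zero]
    have h3 : k₁ ≫ jD2 = 0 := by
      rw [hjD2, ← Category.assoc, hk₁, Category.assoc, hpbc, ← Category.assoc, h2, zero_comp]
    have h4 : k₁ = 0 := by rwa [← cancel_mono jD2, zero_comp]
    have h5 : k ≫ pW = 0 := by rw [← hk₁, h4, zero_comp]
    apply pullback.hom_ext
    · rw [h5, zero_comp]
    · rw [h2, zero_comp]
  haveI : IsIso α := isIso_of_mono_of_epi α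
  refine ⟨inv α ≫ pW, ?_⟩
  rw [Category.assoc, ← hα, IsIso.inv_hom_id]

end Stmt11


namespace Stmt11

variable {A : Type u} [Category.{v} A] [Abelian A]
variable {𝒳 𝒴 𝒞 𝒟 : Set A}

lemma comp_desc_eq {X Y Z T : A} (n : T ⟶ X ⊞ Y) (a : X ⟶ Z) (b : Y ⟶ Z) :
    n ≫ biprod.desc a b = (n ≫ biprod.fst) ≫ a + (n ≫ biprod.snd) ≫ b := by
  conv_lhs => rw [biprod_decomp n]
  rw [Preadditive.add_comp, Category.assoc (n ≫ biprod.fst) biprod.inl (biprod.desc a b),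
    Category.assoc (n ≫ biprod.snd) biprod.inr (biprod.desc a b), biprod.inl_desc,
    biprod.inr_desc]

lemma lift_eq {X Y Z : A} (a : Z ⟶ X) (b : Z ⟶ Y) :
    biprod.lift a b = a ≫ biprod.inl + b ≫ biprod.inr := by
  apply biprod.hom_ext <;> simp

/-- Wakamatsu's lemma: the kernel of a minimal right 𝒞-approximation lies in 𝒟. -/
lemma wakamatsu (hbp : IsBalancedPair 𝒳 𝒴) (hadm : XAdmissible 𝒳)
    (hcp : IsRelCotorsionPair 𝒳 𝒞 𝒟) {C M : A} {φ : C ⟶ M}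
    (hmin : IsMinimalRightApprox 𝒞 φ) : (kernel φ : A) ∈ 𝒟 := by
  have hC : C ∈ 𝒞 := hmin.1.1
  refine memD_of_split hbp hadm hcp fun C' hC' W S => ?_
  haveI := S.mf; haveI := S.eg
  set i : kernel φ ⟶ C := kernel.ι φ with hi
  set β : kernel φ ⟶ W ⊞ C := biprod.lift S.f (-i) with hβ
  have hβeq : β = S.f ≫ biprod.inl + (-i) ≫ biprod.inr := lift_eq _ _
  set πV : W ⊞ C ⟶ cokernel β := cokernel.π β with hπV
  set wh : W ⟶ cokernel β := biprod.inl ≫ πV with hwh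
  set jV : C ⟶ cokernel β := biprod.inr ≫ πV with hjV
  have hrel : S.f ≫ wh = i ≫ jV := by
    have h0 : (S.f ≫ biprod.inl + (-i) ≫ biprod.inr) ≫ πV = 0 := by
      rw [← hβeq]; exact cokernel.condition β
    rw [Preadditive.add_comp, Preadditive.neg_comp, Preadditive.neg_comp, add_neg_eq_zero,
      Category.assoc, Category.assoc] at h0
    exact h0
  haveI hjVm : Mono jV := by
    apply Preadditive.mono_of_cancel_zero
    intro T t ht
    have ht' : (t ≫ biprod.inr) ≫ πV = 0 := by rw [Category.assoc]; exact ht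
    obtain ⟨T₁, τ, hτ, m, hm⟩ := cokerFactor β _ ht'
    haveI := hτ
    have h1 : m ≫ S.f = 0 := by
      have h2 := congrArg (· ≫ biprod.fst) hm
      simpa [hβ] using h2
    have h2 : m = 0 := by rwa [← cancel_mono S.f, zero_comp]
    have h3 : τ ≫ t = 0 := by
      have h4 : (τ ≫ t ≫ (biprod.inr : C ⟶ W ⊞ C)) ≫ biprod.snd = 0 := by
        rw [← hm, h2, zero_comp, zero_comp]
      simpa using h4
    exact zero_of_epi_comp τ h3
  have hqc : β ≫ biprod.desc S.g (0 : C ⟶ C') = 0 := by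
    rw [hβeq]
    simp only [Preadditive.add_comp, Preadditive.neg_comp, Category.assoc, biprod.inl_desc,
      biprod.inr_desc, comp_zero, neg_zero, add_zero, S.zero]
  set qV : cokernel β ⟶ C' := cokernel.desc β (biprod.desc S.g 0) hqc with hqV
  have hwq : wh ≫ qV = S.g := by
    rw [hwh, Category.assoc, hqV, cokernel.π_desc, biprod.inl_desc]
  have hjq : jV ≫ qV = 0 := by
    rw [hjV, Category.assoc, hqV, cokernel.π_desc, biprod.inr_desc]
  haveI : Epi qV := by
    haveI : Epi (wh ≫ qV) := by rw [hwq]; exact S.eg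
    exact epi_of_epi wh qV
  have hexaV : ∀ {T : A} (t : T ⟶ cokernel β), t ≫ qV = 0 → ∃ u : T ⟶ C, u ≫ jV = t := by
    intro T t ht
    have hpb := pullback.condition (f := t) (g := πV)
    haveI : Epi (pullback.fst t πV) := Abelian.epi_pullback_of_epi_g _ _
    set τ := pullback.fst t πV
    set n := pullback.snd t πV
    have hn : n ≫ πV = τ ≫ t := hpb.symm
    have h1 : (n ≫ biprod.fst) ≫ S.g = 0 := by
      have h5 : n ≫ πV ≫ qV = 0 := by
        rw [← Category.assoc, hn, Category.assoc, ht, comp_zero]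
      rw [hqV, cokernel.π_desc] at h5
      rw [comp_desc_eq, comp_zero, add_zero] at h5
      exact h5
    obtain ⟨u, hu⟩ := S.exa _ h1
    have h2 : (u ≫ i + n ≫ biprod.snd) ≫ jV = τ ≫ t := by
      have e1 : (u ≫ i) ≫ jV = (n ≫ biprod.fst) ≫ biprod.inl ≫ πV := by
        rw [Category.assoc, ← hrel, ← Category.assoc, hu, hwh]
      have e2 : (n ≫ biprod.snd) ≫ jV = (n ≫ biprod.snd) ≫ biprod.inr ≫ πV := by
        rw [hjV]
      rw [Preadditive.add_comp, e1, e2, ← Category.assoc, ← Category.assoc,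
        ← Preadditive.add_comp, ← biprod_decomp n, hn]
    obtain ⟨u', hu', -⟩ := descend_of_epi τ (u ≫ i + n ≫ biprod.snd) jV t h2
    exact ⟨u', hu'⟩
  have hliftV : ∀ X ∈ 𝒳, ∀ x : X ⟶ C', ∃ w : X ⟶ cokernel β, w ≫ qV = x := by
    intro X hX x
    obtain ⟨w, hw⟩ := S.liftX X hX x
    exact ⟨w ≫ wh, by rw [Category.assoc, hwq, hw]⟩
  have hzeroV : jV ≫ qV = 0 := hjq
  have hV : (cokernel β : A) ∈ 𝒞 :=
    extClosure_C hbp hadm hcp hC hC' ⟨jV, qV, hzeroV, hjVm, inferInstance, hexaV, hliftV⟩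
  -- the map ψV : cokernel β ⟶ M
  have hψc : β ≫ biprod.desc (0 : W ⟶ M) φ = 0 := by
    rw [hβeq]
    simp only [hi, Preadditive.add_comp, Preadditive.neg_comp, Category.assoc, biprod.inl_desc,
      biprod.inr_desc, comp_zero, zero_add, kernel.condition, neg_zero]
  set ψV : cokernel β ⟶ M := cokernel.desc β (biprod.desc 0 φ) hψc with hψV
  have hwψ : wh ≫ ψV = 0 := by
    rw [hwh, Category.assoc, hψV, cokernel.π_desc, biprod.inl_desc]
  have hjψ : jV ≫ ψV = φ := by
    rw [hjV, Category.assoc, hψV, cokernel.π_desc, biprod.inr_desc]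
  obtain ⟨σV, hσV⟩ := hmin.1.2 (cokernel β) hV ψV
  have hiso : IsIso (jV ≫ σV) := by
    apply hmin.2
    rw [Category.assoc, hσV, hjψ]
  set ρV : cokernel β ⟶ C := σV ≫ inv (jV ≫ σV) with hρV
  have hjρ : jV ≫ ρV = 𝟙 C := by
    rw [hρV, ← Category.assoc, IsIso.hom_inv_id]
  set r' : W ⟶ C := wh ≫ ρV with hr'
  have hfr' : S.f ≫ r' = i := by
    rw [hr', ← Category.assoc, hrel, Category.assoc, hjρ, Category.comp_id]
  have h1 : S.f ≫ r' ≫ φ = 0 := by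
    rw [← Category.assoc, hfr', hi, kernel.condition]
  obtain ⟨m', hm'⟩ := desc_of_exa S.f S.g (fun t ht => S.exa t ht) (r' ≫ φ) h1
  obtain ⟨σ', hσ'⟩ := hmin.1.2 C' hC' m'
  have h2 : (r' - S.g ≫ σ') ≫ φ = 0 := by
    rw [Preadditive.sub_comp, Category.assoc S.g σ' φ, hσ', hm', sub_self]
  set r'' : W ⟶ kernel φ := kernel.lift φ _ h2 with hr''
  have hr''i : r'' ≫ i = r' - S.g ≫ σ' := kernel.lift_ι _ _ _
  have h3 : S.f ≫ r'' = 𝟙 (kernel φ) := by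
    rw [← cancel_mono i, Category.assoc, hr''i, Preadditive.comp_sub, hfr', ← Category.assoc,
      S.zero, zero_comp, sub_zero, Category.id_comp]
  exact S.split_of_retr r'' h3

end Stmt11


namespace Stmt11

variable {A : Type u} [Category.{v} A] [Abelian A]
variable {𝒳 𝒴 𝒞 𝒟 : Set A}

/-- 𝒟 is closed under proper extensions (direct cocycle chase). -/
lemma extClosure_D (hbp : IsBalancedPair 𝒳 𝒴) (hadm : XAdmissible 𝒳)
    (hcp : IsRelCotorsionPair 𝒳 𝒞 𝒟) {D₁ B D₂ : A} (hD₁ : D₁ ∈ 𝒟) (hD₂ : D₂ ∈ 𝒟)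
    (S : PSES 𝒳 D₁ B D₂) : B ∈ 𝒟 := by
  refine (hcp.2 B).2 fun C₁ hC₁ => ?_
  intro P ε hP h hh
  show ∃ k : P.X 0 ⟶ B, P.d (-1) 0 ≫ k = h
  have hh : P.d (-2) (-1) ≫ h = 0 := hh
  haveI := S.mf; haveI := S.eg
  have hc1 : P.d (-2) (-1) ≫ (h ≫ S.g) = 0 := by rw [← Category.assoc, hh, zero_comp]
  obtain ⟨k, hk⟩ := ext_one ((hcp.2 D₂).1 hD₂ C₁ hC₁) hP (h ≫ S.g) hc1
  obtain ⟨k', hk'⟩ := S.liftX _ (hP.2.1 0 le_rfl) k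
  have hc2 : (h - P.d (-1) 0 ≫ k') ≫ S.g = 0 := by
    rw [Preadditive.sub_comp, Category.assoc, hk', hk, sub_self]
  obtain ⟨h'', hh''⟩ := S.exa _ hc2
  have hc3 : P.d (-2) (-1) ≫ h'' = 0 := by
    rw [← cancel_mono S.f, Category.assoc, hh'', zero_comp, Preadditive.comp_sub, hh,
      ← Category.assoc, HomologicalComplex.d_comp_d, zero_comp, zero_sub, neg_zero]
  obtain ⟨k'', hk''⟩ := ext_one ((hcp.2 D₁).1 hD₁ C₁ hC₁) hP h'' hc3
  refine ⟨k' + k'' ≫ S.f, ?_⟩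
  rw [Preadditive.comp_add, ← Category.assoc, hk'', hh'']
  abel

/-- Dual Wakamatsu: the cokernel of a minimal left 𝒟-approximation of an object of 𝒞
lies in 𝒞. -/
lemma dual_wakamatsu (hbp : IsBalancedPair 𝒳 𝒴) (hadm : XAdmissible 𝒳)
    (hcp : IsRelCotorsionPair 𝒳 𝒞 𝒟) {C E C' : A} (hC : C ∈ 𝒞)
    {ψ : C ⟶ E} (hψmin : IsMinimalLeftApprox 𝒟 ψ)
    {qE : E ⟶ C'} (hq0 : ψ ≫ qE = 0) [Epi qE]
    (hexa : ∀ {T : A} (t : T ⟶ E), t ≫ qE = 0 → ∃ a : T ⟶ C, a ≫ ψ = t) : C' ∈ 𝒞 := by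
  have hE : E ∈ 𝒟 := hψmin.1.1
  refine memC_of_split hbp hadm hcp fun D'' hD'' W S => ?_
  haveI := S.mf; haveI := S.eg
  have hc1 : S.f ≫ S.g = (0 : D'' ⟶ E) ≫ qE := by rw [S.zero, zero_comp]
  set j' : D'' ⟶ pullback S.g qE := pullback.lift S.f 0 hc1 with hj'
  have hj'1 : j' ≫ pullback.fst S.g qE = S.f := pullback.lift_fst _ _ _
  have hj'2 : j' ≫ pullback.snd S.g qE = 0 := pullback.lift_snd _ _ _
  haveI : Mono j' := by
    have : Mono (j' ≫ pullback.fst S.g qE) := by rw [hj'1]; exact S.mf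
    exact mono_of_mono j' (pullback.fst S.g qE)
  haveI : Epi (pullback.snd S.g qE) := Abelian.epi_pullback_of_epi_f _ _
  have hexa' : ∀ {T : A} (t : T ⟶ pullback S.g qE), t ≫ pullback.snd S.g qE = 0 →
      ∃ u : T ⟶ D'', u ≫ j' = t := by
    intro T t ht
    have h1 : (t ≫ pullback.fst S.g qE) ≫ S.g = 0 := by
      rw [Category.assoc, pullback.condition, ← Category.assoc, ht, zero_comp]
    obtain ⟨u, hu⟩ := S.exa _ h1
    refine ⟨u, ?_⟩
    apply pullback.hom_ext
    · rw [Category.assoc, hj'1, hu]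
    · rw [Category.assoc, hj'2, comp_zero, ht]
  have hlift' : ∀ X ∈ 𝒳, ∀ x : X ⟶ E,
      ∃ w : X ⟶ pullback S.g qE, w ≫ pullback.snd S.g qE = x := by
    intro X hX x
    obtain ⟨b, hb⟩ := S.liftX X hX (x ≫ qE)
    exact ⟨pullback.lift b x hb, pullback.lift_snd _ _ _⟩
  set S' : PSES 𝒳 D'' (pullback S.g qE) E :=
    ⟨j', pullback.snd S.g qE, hj'2, inferInstance, inferInstance, hexa', hlift'⟩ with hS'
  have hV' : (pullback S.g qE : A) ∈ 𝒟 := extClosure_D hbp hadm hcp hD'' hE S'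
  obtain ⟨ψ', hψ'⟩ := lift_of_memC hbp hadm hcp S' hD'' hC ψ
  have hψ'' : ψ' ≫ pullback.snd S.g qE = ψ := hψ'
  obtain ⟨gh, hgh⟩ := hψmin.1.2 _ hV' ψ'
  have hiso : IsIso (gh ≫ pullback.snd S.g qE) := by
    apply hψmin.2
    rw [← Category.assoc, hgh, hψ'']
  set sE : E ⟶ pullback S.g qE := inv (gh ≫ pullback.snd S.g qE) ≫ gh with hsE
  have hsE1 : sE ≫ pullback.snd S.g qE = 𝟙 E := by
    rw [hsE, Category.assoc, IsIso.inv_hom_id]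
  set hmap : E ⟶ W := sE ≫ pullback.fst S.g qE with hhmap
  have hhg : hmap ≫ S.g = qE := by
    rw [hhmap, Category.assoc, pullback.condition, ← Category.assoc, hsE1, Category.id_comp]
  have h1 : (ψ ≫ hmap) ≫ S.g = 0 := by rw [Category.assoc, hhg, hq0]
  obtain ⟨κ', hκ'⟩ := S.exa _ h1
  obtain ⟨κ'', hκ''⟩ := hψmin.1.2 D'' hD'' κ'
  have h2 : ψ ≫ (hmap - κ'' ≫ S.f) = 0 := by
    rw [Preadditive.comp_sub, ← Category.assoc ψ κ'' S.f, hκ'', hκ', sub_self]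
  obtain ⟨σ, hσ⟩ := desc_of_exa ψ qE (fun t ht => hexa t ht) _ h2
  refine ⟨σ, ?_⟩
  rw [← cancel_epi qE, ← Category.assoc, hσ, Preadditive.sub_comp, hhg, Category.assoc, S.zero,
    comp_zero, sub_zero, Category.comp_id]

/-- left 𝒟-approximations are mono -/
lemma leftApprox_mono (hbp : IsBalancedPair 𝒳 𝒴) (hadm : XAdmissible 𝒳)
    (hcp : IsRelCotorsionPair 𝒳 𝒞 𝒟) {N E : A} {ψ : N ⟶ E} (happ : IsLeftApprox 𝒟 ψ) :
    Mono ψ := by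
  obtain ⟨Q₀, L, η, ρ, hQ₀, hηm, -, -, -, -⟩ := cores_pack hbp hadm N
  have hQD : Q₀ ∈ 𝒟 := Y_sub_D hbp hadm hcp hQ₀
  obtain ⟨v, hv⟩ := happ.2 Q₀ hQD η
  haveI := hηm
  haveI : Mono (ψ ≫ v) := by rw [hv]; infer_instance
  exact mono_of_mono ψ v

end Stmt11


namespace Stmt11

variable {A : Type u} [Category.{v} A] [Abelian A]
variable {𝒳 𝒴 𝒞 𝒟 : Set A}

/-- Proper sequences are `Hom(-,𝒴)`-exact. -/
lemma pses_Yext (hbp : IsBalancedPair 𝒳 𝒴) (hadm : XAdmissible 𝒳)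
    {A₀ B₀ C₀ : A} (S : PSES 𝒳 A₀ B₀ C₀) {Y : A} (hY : Y ∈ 𝒴) (a : A₀ ⟶ Y) :
    ∃ b : B₀ ⟶ Y, S.f ≫ b = a := by
  haveI := S.mf; haveI := S.eg
  set β : A₀ ⟶ B₀ ⊞ Y := biprod.lift S.f (-a) with hβ
  have hβeq : β = S.f ≫ biprod.inl + (-a) ≫ biprod.inr := lift_eq _ _
  set πV : B₀ ⊞ Y ⟶ cokernel β := cokernel.π β with hπV
  set wh : B₀ ⟶ cokernel β := biprod.inl ≫ πV with hwh
  set jY : Y ⟶ cokernel β := biprod.inr ≫ πV with hjY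
  have hrel : S.f ≫ wh = a ≫ jY := by
    have h0 : (S.f ≫ biprod.inl + (-a) ≫ biprod.inr) ≫ πV = 0 := by
      rw [← hβeq]; exact cokernel.condition β
    rw [Preadditive.add_comp, Preadditive.neg_comp, Preadditive.neg_comp, add_neg_eq_zero,
      Category.assoc, Category.assoc] at h0
    exact h0
  haveI hjYm : Mono jY := by
    apply Preadditive.mono_of_cancel_zero
    intro T t ht
    have ht' : (t ≫ biprod.inr) ≫ πV = 0 := by rw [Category.assoc]; exact ht
    obtain ⟨T₁, τ, hτ, m, hm⟩ := cokerFactor β _ ht'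
    haveI := hτ
    have h1 : m ≫ S.f = 0 := by
      have h2 := congrArg (· ≫ biprod.fst) hm
      simpa [hβ] using h2
    have h2 : m = 0 := by rwa [← cancel_mono S.f, zero_comp]
    have h3 : τ ≫ t = 0 := by
      have h4 : (τ ≫ t ≫ (biprod.inr : Y ⟶ B₀ ⊞ Y)) ≫ biprod.snd = 0 := by
        rw [← hm, h2, zero_comp, zero_comp]
      simpa using h4
    exact zero_of_epi_comp τ h3
  have hqc : β ≫ biprod.desc S.g (0 : Y ⟶ C₀) = 0 := by
    rw [hβeq]
    simp only [Preadditive.add_comp, Preadditive.neg_comp, Category.assoc, biprod.inl_desc,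
      biprod.inr_desc, comp_zero, neg_zero, add_zero, S.zero]
  set qV : cokernel β ⟶ C₀ := cokernel.desc β (biprod.desc S.g 0) hqc with hqV
  have hwq : wh ≫ qV = S.g := by
    rw [hwh, Category.assoc, hqV, cokernel.π_desc, biprod.inl_desc]
  have hjq : jY ≫ qV = 0 := by
    rw [hjY, Category.assoc, hqV, cokernel.π_desc, biprod.inr_desc]
  haveI : Epi qV := by
    haveI : Epi (wh ≫ qV) := by rw [hwq]; exact S.eg
    exact epi_of_epi wh qV
  have hexaV : ∀ {T : A} (t : T ⟶ cokernel β), t ≫ qV = 0 → ∃ u : T ⟶ Y, u ≫ jY = t := by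
    intro T t ht
    have hpb := pullback.condition (f := t) (g := πV)
    haveI : Epi (pullback.fst t πV) := Abelian.epi_pullback_of_epi_g _ _
    set τ := pullback.fst t πV
    set n := pullback.snd t πV
    have hn : n ≫ πV = τ ≫ t := hpb.symm
    have h1 : (n ≫ biprod.fst) ≫ S.g = 0 := by
      have h5 : n ≫ πV ≫ qV = 0 := by
        rw [← Category.assoc, hn, Category.assoc, ht, comp_zero]
      rw [hqV, cokernel.π_desc] at h5
      rw [comp_desc_eq, comp_zero, add_zero] at h5
      exact h5
    obtain ⟨u, hu⟩ := S.exa _ h1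
    have h2 : (u ≫ a + n ≫ biprod.snd) ≫ jY = τ ≫ t := by
      have e1 : (u ≫ a) ≫ jY = (n ≫ biprod.fst) ≫ biprod.inl ≫ πV := by
        rw [Category.assoc, ← hrel, ← Category.assoc, hu, hwh]
      have e2 : (n ≫ biprod.snd) ≫ jY = (n ≫ biprod.snd) ≫ biprod.inr ≫ πV := by
        rw [hjY]
      rw [Preadditive.add_comp, e1, e2, ← Category.assoc, ← Category.assoc,
        ← Preadditive.add_comp, ← biprod_decomp n, hn]
    obtain ⟨u', hu', -⟩ := descend_of_epi τ (u ≫ a + n ≫ biprod.snd) jY t h2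
    exact ⟨u', hu'⟩
  have hliftV : ∀ X ∈ 𝒳, ∀ x : X ⟶ C₀, ∃ w : X ⟶ cokernel β, w ≫ qV = x := by
    intro X hX x
    obtain ⟨w, hw⟩ := S.liftX X hX x
    exact ⟨w ≫ wh, by rw [Category.assoc, hwq, hw]⟩
  set SV : PSES 𝒳 Y (cokernel β) C₀ := ⟨jY, qV, hjq, hjYm, inferInstance, hexaV, hliftV⟩
  obtain ⟨r, hr⟩ := SV.retr_of_split (split_of_mem_Y hbp hadm hY SV)
  have hr' : jY ≫ r = 𝟙 Y := hr
  refine ⟨wh ≫ r, ?_⟩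
  rw [← Category.assoc, hrel, Category.assoc, hr', Category.comp_id]

end Stmt11


namespace Stmt11

variable {A : Type u} [Category.{v} A] [Abelian A]
variable {𝒳 𝒴 𝒞 𝒟 : Set A}

/-- Main construction: every object has a minimal left 𝒟-approximation. -/
lemma envelope_exists (hbp : IsBalancedPair 𝒳 𝒴) (hadm : XAdmissible 𝒳)
    (hcp : IsRelCotorsionPair 𝒳 𝒞 𝒟)
    (hher : ∀ i : ℕ, 1 ≤ i → ∀ C ∈ 𝒞, ∀ D ∈ 𝒟, ExtStarVanish 𝒳 i C D)
    (h1 : ∀ M : A, ∃ (E : A) (f : E ⟶ M), IsMinimalRightApprox 𝒞 f)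
    (h2 : ∀ C ∈ 𝒞, ∃ (Y : A) (g : C ⟶ Y), IsMinimalLeftApprox 𝒟 g)
    (M : A) : ∃ (Y : A) (g : M ⟶ Y), IsMinimalLeftApprox 𝒟 g := by
  obtain ⟨C, φ, hφ⟩ := h1 M
  have hC : C ∈ 𝒞 := hφ.1.1
  haveI hφe : Epi φ := by
    obtain ⟨X₀, e, hX₀, he⟩ := epiApprox hbp hadm M
    obtain ⟨u, hu⟩ := hφ.1.2 X₀ (X_sub_C hbp hadm hcp hX₀) e
    haveI := he
    haveI : Epi (u ≫ φ) := by rw [hu]; infer_instance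
    exact epi_of_epi u φ
  set i : kernel φ ⟶ C := kernel.ι φ with hidef
  have hK : (kernel φ : A) ∈ 𝒟 := wakamatsu hbp hadm hcp hφ
  set Sφ : PSES 𝒳 (kernel φ) C M :=
    ⟨i, φ, kernel.condition φ, inferInstance, inferInstance,
      fun t ht => ⟨kernel.lift φ t ht, kernel.lift_ι _ _ _⟩,
      fun X hX x => hφ.1.2 X (X_sub_C hbp hadm hcp hX) x⟩ with hSφ
  obtain ⟨E, ψ, hψ⟩ := h2 C hC
  have hE : E ∈ 𝒟 := hψ.1.1
  haveI hψm : Mono ψ := leftApprox_mono hbp hadm hcp hψ.1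
  -- the pushout
  set χ₀ : C ⟶ M ⊞ E := biprod.lift φ (-ψ) with hχ₀
  have hχeq : χ₀ = φ ≫ biprod.inl + (-ψ) ≫ biprod.inr := lift_eq _ _
  set πb : M ⊞ E ⟶ cokernel χ₀ := cokernel.π χ₀ with hπb
  set μ : M ⟶ cokernel χ₀ := biprod.inl ≫ πb with hμ
  set jb : E ⟶ cokernel χ₀ := biprod.inr ≫ πb with hjb
  have hsq : φ ≫ μ = ψ ≫ jb := by
    have h0 : (φ ≫ biprod.inl + (-ψ) ≫ biprod.inr) ≫ πb = 0 := by
      rw [← hχeq]; exact cokernel.condition χ₀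
    rw [Preadditive.add_comp, Preadditive.neg_comp, Preadditive.neg_comp, add_neg_eq_zero,
      Category.assoc, Category.assoc] at h0
    exact h0
  haveI hμm : Mono μ := by
    apply Preadditive.mono_of_cancel_zero
    intro T t ht
    have ht' : (t ≫ biprod.inl) ≫ πb = 0 := by rw [Category.assoc]; exact ht
    obtain ⟨T₁, τ, hτ, m, hm⟩ := cokerFactor χ₀ _ ht'
    haveI := hτ
    have hm1 : m ≫ ψ = 0 := by
      have hm2 := congrArg (· ≫ biprod.snd) hm
      simp only [hχ₀, Category.assoc, biprod.lift_snd, biprod.inl_snd, comp_zero,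
        Preadditive.comp_neg] at hm2
      rwa [neg_eq_zero] at hm2
    have hm3 : m = 0 := by rwa [← cancel_mono ψ, zero_comp]
    have hm4 : τ ≫ t = 0 := by
      have h4 : (τ ≫ t ≫ (biprod.inl : M ⟶ M ⊞ E)) ≫ biprod.fst = 0 := by
        rw [← hm, hm3, zero_comp, zero_comp]
      simpa using h4
    exact zero_of_epi_comp τ hm4
  haveI hjbe : Epi jb := by
    apply Preadditive.epi_of_cancel_zero
    intro Z c hc
    have e1 : (φ ≫ μ) ≫ c = 0 := by rw [hsq, Category.assoc, hc, comp_zero]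
    have e2 : μ ≫ c = 0 := by
      rw [Category.assoc] at e1
      exact zero_of_epi_comp φ e1
    have e3 : πb ≫ c = 0 := by
      apply biprod.hom_ext'
      · rw [← Category.assoc, ← hμ, e2, comp_zero]
      · rw [← Category.assoc, ← hjb, hc, comp_zero]
    exact zero_of_epi_comp πb e3
  -- the sequence 0 → K → E → Db → 0
  set kE : kernel φ ⟶ E := i ≫ ψ with hkE
  haveI : Mono kE := mono_comp i ψ
  have hkEz : kE ≫ jb = 0 := by
    rw [hkE, Category.assoc, ← hsq, ← Category.assoc, hidef, kernel.condition, zero_comp]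
  have hexajb : ∀ {T : A} (t : T ⟶ E), t ≫ jb = 0 → ∃ u : T ⟶ kernel φ, u ≫ kE = t := by
    intro T t ht
    have ht' : (t ≫ biprod.inr) ≫ πb = 0 := by rw [Category.assoc]; exact ht
    obtain ⟨T₁, τ, hτ, m, hm⟩ := cokerFactor χ₀ _ ht'
    haveI := hτ
    have hm1 : m ≫ φ = 0 := by
      have hm2 := congrArg (· ≫ biprod.fst) hm
      simpa [hχ₀] using hm2
    set m' : T₁ ⟶ kernel φ := kernel.lift φ m hm1 with hm'
    have hm'i : m' ≫ i = m := kernel.lift_ι _ _ _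
    have hm3 : m ≫ (-ψ) = τ ≫ t := by
      have hm2 := congrArg (· ≫ biprod.snd) hm
      simpa [hχ₀] using hm2
    have hm4 : (-m') ≫ kE = τ ≫ t := by
      rw [Preadditive.neg_comp, hkE, ← Category.assoc, hm'i, ← Preadditive.comp_neg, hm3]
    obtain ⟨u, hu, -⟩ := descend_of_epi τ (-m') kE t hm4
    exact ⟨u, hu⟩
  have hYextjb : ∀ Y ∈ 𝒴, ∀ a : kernel φ ⟶ Y, ∃ b : E ⟶ Y, kE ≫ b = a := by
    intro Y hY a
    obtain ⟨b, hb⟩ := pses_Yext hbp hadm Sφ hY a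
    obtain ⟨c, hc⟩ := hψ.1.2 Y (Y_sub_D hbp hadm hcp hY) b
    refine ⟨c, ?_⟩
    rw [hkE, Category.assoc, hc]
    exact hb
  have hliftjb := liftX_of_Yext hbp hadm kE jb hkEz hexajb hYextjb
  set Sjb : PSES 𝒳 (kernel φ) E (cokernel χ₀) :=
    ⟨kE, jb, hkEz, inferInstance, inferInstance, hexajb, hliftjb⟩ with hSjb
  -- Db ∈ 𝒟
  have hDb : (cokernel χ₀ : A) ∈ 𝒟 := by
    refine (hcp.2 _).2 fun C₁ hC₁ => ?_
    intro P ε hP h hh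
    show ∃ k : P.X 0 ⟶ cokernel χ₀, P.d (-1) 0 ≫ k = h
    have hh : P.d (-2) (-1) ≫ h = 0 := hh
    obtain ⟨hhat, hhhat⟩ := Sjb.liftX _ (hP.2.1 (-1) (by norm_num)) h
    have hu0 : (P.d (-2) (-1) ≫ hhat) ≫ jb = 0 := by
      rw [Category.assoc, hhhat, hh]
    obtain ⟨u, hu⟩ := Sjb.exa _ hu0
    have hucoc : P.d (-3) (-2) ≫ u = 0 := by
      rw [← cancel_mono kE, Category.assoc, hu, zero_comp, ← Category.assoc,
        HomologicalComplex.d_comp_d, zero_comp]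
    obtain ⟨κ₂, hκ₂⟩ := ext_two (hher 2 (by norm_num) C₁ hC₁ _ hK) hP u hucoc
    have hhhat'c : P.d (-2) (-1) ≫ (hhat - κ₂ ≫ kE) = 0 := by
      rw [Preadditive.comp_sub, ← Category.assoc, hκ₂, hu, sub_self]
    obtain ⟨κ₁, hκ₁⟩ := ext_one ((hcp.1 C₁).1 hC₁ E hE) hP _ hhhat'c
    refine ⟨κ₁ ≫ jb, ?_⟩
    rw [← Category.assoc, hκ₁, Preadditive.sub_comp, hhhat, Category.assoc, hkEz, comp_zero,
      sub_zero]
  -- approximation property of μ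
  have happrox : ∀ Y' ∈ 𝒟, ∀ f : M ⟶ Y', ∃ g₀ : cokernel χ₀ ⟶ Y', μ ≫ g₀ = f := by
    intro Y' hY' f
    obtain ⟨c', hc'⟩ := hψ.1.2 Y' hY' (φ ≫ f)
    have hcond : χ₀ ≫ biprod.desc f c' = 0 := by
      rw [hχeq]
      simp only [Preadditive.add_comp, Preadditive.neg_comp, Category.assoc, biprod.inl_desc,
        biprod.inr_desc, hc', add_neg_cancel]
    refine ⟨cokernel.desc χ₀ (biprod.desc f c') hcond, ?_⟩
    rw [hμ, Category.assoc, cokernel.π_desc, biprod.inl_desc]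
  -- cokernel of μ
  set q : cokernel χ₀ ⟶ cokernel μ := cokernel.π μ with hq
  set qE : E ⟶ cokernel μ := jb ≫ q with hqE
  have hψq : ψ ≫ qE = 0 := by
    rw [hqE, ← Category.assoc, ← hsq, Category.assoc, hq, cokernel.condition, comp_zero]
  haveI : Epi qE := by rw [hqE]; exact epi_comp _ _
  have hexaqE : ∀ {T : A} (t : T ⟶ E), t ≫ qE = 0 → ∃ a : T ⟶ C, a ≫ ψ = t := by
    intro T t ht
    have ht2 : (t ≫ jb) ≫ cokernel.π μ = 0 := by
      rw [Category.assoc]; exact ht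
    obtain ⟨t', ht'⟩ := monoFactor μ (t ≫ jb) ht2
    have hsub : (t' ≫ biprod.inl - t ≫ biprod.inr) ≫ πb = 0 := by
      rw [Preadditive.sub_comp, Category.assoc, Category.assoc, ← hμ, ← hjb, ht', sub_self]
    obtain ⟨T₁, τ, hτ, m, hm⟩ := cokerFactor χ₀ _ hsub
    haveI := hτ
    have hm3 : m ≫ ψ = τ ≫ t := by
      have hm2 := congrArg (· ≫ biprod.snd) hm
      simp only [hχ₀, Category.assoc, biprod.lift_snd, Preadditive.comp_neg,
        Preadditive.sub_comp, Preadditive.comp_sub, biprod.inl_snd, biprod.inr_snd, comp_zero,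
        Category.comp_id, zero_sub, neg_neg] at hm2
      rwa [neg_eq_iff_eq_neg, neg_neg] at hm2
    obtain ⟨a, ha, -⟩ := descend_of_epi τ m ψ t hm3
    exact ⟨a, ha⟩
  have hCs : (cokernel μ : A) ∈ 𝒞 := dual_wakamatsu hbp hadm hcp hC hψ hψq hexaqE
  -- the two proper sequences over cokernel μ
  have hexaq : ∀ {T : A} (t : T ⟶ cokernel χ₀), t ≫ q = 0 → ∃ w : T ⟶ M, w ≫ μ = t :=
    fun t ht => monoFactor μ t ht
  have hliftq := liftX_of_Yext hbp hadm μ q (cokernel.condition μ) hexaq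
    (fun Y hY a => happrox Y (Y_sub_D hbp hadm hcp hY) a)
  set Sμ : PSES 𝒳 M (cokernel χ₀) (cokernel μ) :=
    ⟨μ, q, cokernel.condition μ, inferInstance, inferInstance, hexaq, hliftq⟩ with hSμ
  have hliftqE := liftX_of_Yext hbp hadm ψ qE hψq hexaqE
    (fun Y hY a => hψ.1.2 Y (Y_sub_D hbp hadm hcp hY) a)
  set SψE : PSES 𝒳 C E (cokernel μ) :=
    ⟨ψ, qE, hψq, inferInstance, inferInstance, hexaqE, hliftqE⟩ with hSψE
  -- minimality
  refine ⟨cokernel χ₀, μ, ⟨hDb, happrox⟩, ?_⟩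
  intro s hs
  have hts0 : μ ≫ s ≫ q = 0 := by
    rw [← Category.assoc, hs, hq, cokernel.condition]
  set t : cokernel μ ⟶ cokernel μ := cokernel.desc μ (s ≫ q) hts0 with htdef
  have hqt : q ≫ t = s ≫ q := cokernel.π_desc _ _ _
  obtain ⟨R, εs, hR, -⟩ := hbp.2.2.1 (cokernel μ)
  haveI hεse : Epi εs := res_eps_epi hadm hR
  have hR0X : R.X 0 ∈ 𝒳 := hR.2.1 0 le_rfl
  obtain ⟨atil, hatil⟩ := Sμ.liftX _ hR0X εs
  have hatil : atil ≫ q = εs := hatil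
  obtain ⟨etil, hetil⟩ := SψE.liftX _ hR0X εs
  have hetil : etil ≫ qE = εs := hetil
  obtain ⟨ehat, hehat⟩ := SψE.liftX _ hR0X (εs ≫ t)
  have hehat : ehat ≫ qE = εs ≫ t := hehat
  have hd0 : R.d (-1) 0 ≫ εs = 0 := hR.2.2.1
  have hwD0 : (R.d (-1) 0 ≫ atil) ≫ q = 0 := by rw [Category.assoc, hatil, hd0]
  obtain ⟨wD, hwD⟩ := Sμ.exa _ hwD0
  have hwD : wD ≫ μ = R.d (-1) 0 ≫ atil := hwD
  have hwE0 : (R.d (-1) 0 ≫ etil) ≫ qE = 0 := by rw [Category.assoc, hetil, hd0]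
  obtain ⟨wE, hwE⟩ := SψE.exa _ hwE0
  have hwE : wE ≫ ψ = R.d (-1) 0 ≫ etil := hwE
  have hwh0 : (R.d (-1) 0 ≫ ehat) ≫ qE = 0 := by
    rw [Category.assoc, hehat, ← Category.assoc, hd0, zero_comp]
  obtain ⟨what, hwhat⟩ := SψE.exa _ hwh0
  have hwhat : what ≫ ψ = R.d (-1) 0 ≫ ehat := hwhat
  have hz0 : (etil ≫ jb - atil) ≫ q = 0 := by
    have e1 : (etil ≫ jb) ≫ q = εs := by rw [Category.assoc, ← hqE, hetil]
    rw [Preadditive.sub_comp, e1, hatil, sub_self]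
  obtain ⟨ζ, hζ⟩ := Sμ.exa _ hz0
  have hζ : ζ ≫ μ = etil ≫ jb - atil := hζ
  have hz0' : (ehat ≫ jb - atil ≫ s) ≫ q = 0 := by
    have e1 : (ehat ≫ jb) ≫ q = εs ≫ t := by rw [Category.assoc, ← hqE, hehat]
    have e2 : (atil ≫ s) ≫ q = εs ≫ t := by
      rw [Category.assoc, ← hqt, ← Category.assoc, hatil]
    rw [Preadditive.sub_comp, e1, e2, sub_self]
  obtain ⟨ζ', hζ'⟩ := Sμ.exa _ hz0'
  have hζ' : ζ' ≫ μ = ehat ≫ jb - atil ≫ s := hζ'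
  set δ : R.X (-1) ⟶ C := wE - what with hδ
  have hδφ : δ ≫ φ = R.d (-1) 0 ≫ (ζ - ζ') := by
    rw [← cancel_mono μ]
    have eL : (δ ≫ φ) ≫ μ = (R.d (-1) 0 ≫ etil) ≫ jb - (R.d (-1) 0 ≫ ehat) ≫ jb := by
      rw [Category.assoc, hsq, ← Category.assoc, hδ, Preadditive.sub_comp,
        Preadditive.sub_comp, hwE, hwhat]
    have hds : R.d (-1) 0 ≫ atil ≫ s = R.d (-1) 0 ≫ atil := by
      rw [← Category.assoc, ← hwD, Category.assoc, hs]
    have eR : (R.d (-1) 0 ≫ (ζ - ζ')) ≫ μ =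
        (R.d (-1) 0 ≫ etil) ≫ jb - (R.d (-1) 0 ≫ ehat) ≫ jb := by
      rw [Category.assoc, Preadditive.sub_comp, hζ, hζ', Preadditive.comp_sub,
        Preadditive.comp_sub, Preadditive.comp_sub, hds,
        ← Category.assoc (R.d (-1) 0) etil jb, ← Category.assoc (R.d (-1) 0) ehat jb]
      abel
    rw [eL, eR]
  obtain ⟨ξ₁, hξ₁⟩ := Sφ.liftX _ hR0X (ζ - ζ')
  have hξ₁ : ξ₁ ≫ φ = ζ - ζ' := hξ₁
  have hδ2 : (δ - R.d (-1) 0 ≫ ξ₁) ≫ φ = 0 := by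
    rw [Preadditive.sub_comp, hδφ, Category.assoc, hξ₁, sub_self]
  set δK : R.X (-1) ⟶ kernel φ := kernel.lift φ _ hδ2 with hδKdef
  have hδKi : δK ≫ i = δ - R.d (-1) 0 ≫ ξ₁ := kernel.lift_ι _ _ _
  have hwEc : R.d (-2) (-1) ≫ wE = 0 := by
    rw [← cancel_mono ψ, Category.assoc, hwE, zero_comp, ← Category.assoc,
      HomologicalComplex.d_comp_d, zero_comp]
  have hwhc : R.d (-2) (-1) ≫ what = 0 := by
    rw [← cancel_mono ψ, Category.assoc, hwhat, zero_comp, ← Category.assoc,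
      HomologicalComplex.d_comp_d, zero_comp]
  have hδKc : R.d (-2) (-1) ≫ δK = 0 := by
    have e : (R.d (-2) (-1) ≫ δK) ≫ i = 0 := by
      rw [Category.assoc, hδKi, Preadditive.comp_sub, hδ, Preadditive.comp_sub, hwEc, hwhc,
        ← Category.assoc, HomologicalComplex.d_comp_d, zero_comp]
      simp
    rw [← cancel_mono i, e, zero_comp]
  obtain ⟨κ, hκ⟩ := ext_one ((hcp.1 _).1 hCs _ hK) hR δK hδKc
  set ξ₂ : R.X 0 ⟶ C := ξ₁ + κ ≫ i with hξ₂
  have hδξ : R.d (-1) 0 ≫ ξ₂ = δ := by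
    rw [hξ₂, Preadditive.comp_add, ← Category.assoc, hκ, hδKi]
    abel
  set Pg : C ⊞ R.X 0 ⟶ E := biprod.desc ψ etil with hPg
  have hinlP : biprod.inl ≫ Pg = ψ := by rw [hPg, biprod.inl_desc]
  have hinrP : biprod.inr ≫ Pg = etil := by rw [hPg, biprod.inr_desc]
  haveI hPge : Epi Pg := by
    apply Preadditive.epi_of_cancel_zero
    intro Z c hc
    have hc1 : ψ ≫ c = 0 := by
      rw [← hinlP, Category.assoc, hc, comp_zero]
    have hc2 : etil ≫ c = 0 := by
      rw [← hinrP, Category.assoc, hc, comp_zero]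
    obtain ⟨cb, hcb⟩ := desc_of_exa ψ qE (fun z hz => hexaqE z hz) c hc1
    have e1 : εs ≫ cb = 0 := by rw [← hetil, Category.assoc, hcb, hc2]
    have e2 : cb = 0 := zero_of_epi_comp εs e1
    rw [← hcb, e2, comp_zero]
  set ehat' : R.X 0 ⟶ E := ehat + ξ₂ ≫ ψ with hehat'
  have hdesc : kernel.ι Pg ≫ biprod.desc ψ ehat' = 0 := by
    set u := kernel.ι Pg ≫ biprod.fst with hu
    set v := kernel.ι Pg ≫ biprod.snd with hv
    have huv : u ≫ ψ + v ≫ etil = 0 := by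
      rw [hu, hv, ← comp_desc_eq, ← hPg, kernel.condition]
    have hvε : v ≫ εs = 0 := by
      have e1 : (u ≫ ψ + v ≫ etil) ≫ qE = 0 := by rw [huv, zero_comp]
      rw [Preadditive.add_comp, Category.assoc u ψ qE, Category.assoc v etil qE, hψq, hetil,
        comp_zero, zero_add] at e1
      exact e1
    obtain ⟨T₁, τ, hτ, r, hr⟩ := res_rel0 hbp hadm hR v hvε
    haveI := hτ
    have hve : v ≫ (ehat' - etil) = 0 := by
      have e3 : R.d (-1) 0 ≫ (ehat' - etil) = 0 := by
        rw [hehat', Preadditive.comp_sub, Preadditive.comp_add, ← hwhat, ← hwE,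
          ← Category.assoc, hδξ, hδ, Preadditive.sub_comp]
        abel
      have e2 : τ ≫ v ≫ (ehat' - etil) = 0 := by
        rw [← Category.assoc, ← hr, Category.assoc, e3, comp_zero]
      exact zero_of_epi_comp τ e2
    have e4 : kernel.ι Pg ≫ biprod.desc ψ ehat' = u ≫ ψ + v ≫ ehat' := comp_desc_eq _ _ _
    have e5 : v ≫ ehat' = v ≫ etil + v ≫ (ehat' - etil) := by
      rw [← Preadditive.comp_add]
      congr 1
      abel
    rw [e4, e5, hve, add_zero, huv]
  set g : E ⟶ E := Abelian.epiDesc Pg (biprod.desc ψ ehat') hdesc with hgdef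
  have hPgg : Pg ≫ g = biprod.desc ψ ehat' := Abelian.comp_epiDesc _ _ _
  have hψg : ψ ≫ g = ψ := by
    have e1 : (biprod.inl ≫ Pg) ≫ g = biprod.inl ≫ biprod.desc ψ ehat' := by
      rw [Category.assoc, hPgg]
    rw [hinlP, biprod.inl_desc] at e1
    exact e1
  have hetilg : etil ≫ g = ehat' := by
    have e1 : (biprod.inr ≫ Pg) ≫ g = biprod.inr ≫ biprod.desc ψ ehat' := by
      rw [Category.assoc, hPgg]
    rw [hinrP, biprod.inr_desc] at e1
    exact e1
  have hgq : g ≫ qE = qE ≫ t := by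
    have h1 : Pg ≫ g ≫ qE = Pg ≫ qE ≫ t := by
      apply biprod.hom_ext'
      · have l : biprod.inl ≫ Pg ≫ g ≫ qE = 0 := by
          rw [← Category.assoc, hinlP, ← Category.assoc, hψg, hψq]
        have r : biprod.inl ≫ Pg ≫ qE ≫ t = 0 := by
          rw [← Category.assoc, hinlP, ← Category.assoc, hψq, zero_comp]
        rw [l, r]
      · have l : biprod.inr ≫ Pg ≫ g ≫ qE = εs ≫ t := by
          rw [← Category.assoc, hinrP, ← Category.assoc, hetilg, hehat',
            Preadditive.add_comp, hehat, Category.assoc, hψq, comp_zero, add_zero]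
        have r : biprod.inr ≫ Pg ≫ qE ≫ t = εs ≫ t := by
          rw [← Category.assoc, hinrP, ← Category.assoc, hetil]
        rw [l, r]
    exact (cancel_epi Pg).1 h1
  haveI hgiso : IsIso g := hψ.2 g hψg
  have hψginv : ψ ≫ inv g = ψ := by
    rw [← cancel_mono g, Category.assoc, IsIso.inv_hom_id, Category.comp_id, hψg]
  haveI hte : Epi t := by
    haveI : Epi (g ≫ qE) := epi_comp _ _
    haveI : Epi (qE ≫ t) := by rw [← hgq]; infer_instance
    exact epi_of_epi qE t
  haveI htm : Mono t := by
    apply Preadditive.mono_of_cancel_zero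
    intro T k hk
    have hpb := pullback.condition (f := k) (g := qE)
    haveI : Epi (pullback.fst k qE) := Abelian.epi_pullback_of_epi_g _ _
    have hn : pullback.snd k qE ≫ qE = pullback.fst k qE ≫ k := hpb.symm
    have h1 : (pullback.snd k qE ≫ g) ≫ qE = 0 := by
      rw [Category.assoc, hgq, ← Category.assoc, hn, Category.assoc, hk, comp_zero]
    obtain ⟨a, ha⟩ := hexaqE _ h1
    have h2 : pullback.snd k qE = a ≫ ψ := by
      rw [← Category.comp_id (pullback.snd k qE), ← IsIso.hom_inv_id g, ← Category.assoc,
        ← ha, Category.assoc, hψginv]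
    have h3 : pullback.fst k qE ≫ k = 0 := by
      rw [← hn, h2, Category.assoc, hψq, comp_zero]
    exact zero_of_epi_comp _ h3
  haveI hsm : Mono s := by
    apply Preadditive.mono_of_cancel_zero
    intro T k hk
    have h1 : (k ≫ q) ≫ t = 0 := by
      rw [Category.assoc, hqt, ← Category.assoc, hk, zero_comp]
    have h2 : k ≫ q = 0 := by rwa [← cancel_mono t, zero_comp]
    obtain ⟨k', hk'⟩ := monoFactor μ k h2
    have h3 : k' ≫ μ ≫ s = 0 := by rw [← Category.assoc, hk', hk]
    rw [hs] at h3
    rw [← hk', h3]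
  haveI hse : Epi s := by
    apply Preadditive.epi_of_cancel_zero
    intro Z c hc
    have h1 : μ ≫ c = 0 := by rw [← hs, Category.assoc, hc, comp_zero]
    have hqcb : q ≫ cokernel.desc μ c h1 = c := cokernel.π_desc _ _ _
    have h2 : q ≫ t ≫ cokernel.desc μ c h1 = 0 := by
      rw [← Category.assoc, hqt, Category.assoc, hqcb, hc]
    have h3 : t ≫ cokernel.desc μ c h1 = 0 := zero_of_epi_comp q h2
    have h4 : cokernel.desc μ c h1 = 0 := by
      haveI : IsIso t := isIso_of_mono_of_epi t
      rw [← Category.id_comp (cokernel.desc μ c h1), ← IsIso.inv_hom_id t, Category.assoc, h3,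
        comp_zero]
    rw [← hqcb, h4, comp_zero]
  exact isIso_of_mono_of_epi s


end Stmt11


theorem stmt11 (𝒳 𝒴 𝒞 𝒟 : Set A) (hbp : IsBalancedPair 𝒳 𝒴) (hadm : XAdmissible 𝒳)
    (hcp : IsRelCotorsionPair 𝒳 𝒞 𝒟)
    (hher : ∀ i : ℕ, 1 ≤ i → ∀ C ∈ 𝒞, ∀ D ∈ 𝒟, ExtStarVanish 𝒳 i C D)
    (h1 : ∀ M : A, ∃ (E : A) (f : E ⟶ M), IsMinimalRightApprox 𝒞 f)
    (h2 : ∀ C ∈ 𝒞, ∃ (Y : A) (g : C ⟶ Y), IsMinimalLeftApprox 𝒟 g) :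
    ∀ M : A, (∃ (E : A) (f : E ⟶ M), IsMinimalRightApprox 𝒞 f) ∧
      (∃ (Y : A) (g : M ⟶ Y), IsMinimalLeftApprox 𝒟 g) := by
  intro M
  exact ⟨h1 M, Stmt11.envelope_exists hbp hadm hcp hher h1 h2 M⟩
end

section
/- Let 𝒳 be a full additive subcategory of an abelian category 𝒜. For any bounded-above complex X• with components in 𝒳 and any complex C•, the localization functor induces an isomorphism of abelian groups Hom_{K(𝒜)}(X•, C•) ≅ Hom_{D_{ℝ𝒳}(𝒜)}(X•, C•), where D_{ℝ𝒳}(𝒜) is the Verdier quotient of K(𝒜) by the thick subcategory of right 𝒳-acyclic complexes. -/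
open CategoryTheory Limits

universe v u

variable {A : Type u} [Category.{v} A] [Abelian A]

section stmt13

/-- right `𝒳`-quasi-isomorphisms, as a class of morphisms of the homotopy category -/
noncomputable def RightW (𝒳 : Set A) :
    MorphismProperty (HomotopyCategory A (ComplexShape.up ℤ)) := fun K L φ =>
  ∃ f : K.as ⟶ L.as, (HomotopyCategory.quotient A (ComplexShape.up ℤ)).map f = φ ∧
    RightAcyclicComplex 𝒳 (CochainComplex.mappingCone f)

section aux

open HomotopyCategory CochainComplex CochainComplex.mappingCone Pretriangulated ZeroObject

/-- composing an `eqToHom` with a differential -/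
lemma eqToHom_comp_d (E : CochainComplex A ℤ) {i j : ℤ} (h : i = j) (k : ℤ) :
    eqToHom (congrArg E.X h) ≫ E.d j k = E.d i k := by subst h; simp

-- The components of a null-homotopy of `f : X ⟶ E`, constructed by downward
-- recursion starting above the bound `b` of `X`.
open Classical in
noncomputable def hfun (X E : CochainComplex A ℤ) (f : X ⟶ E) (b : ℤ) :
    ∀ n : ℤ, (X.X n ⟶ E.X (n - 1)) := fun n =>
  if hn : b < n then 0
  else
    if hc : ∃ k : X.X n ⟶ E.X (n - 1), k ≫ E.d (n - 1) n =
        f.f n - X.d n (n + 1) ≫ (hfun X E f b (n + 1) ≫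
          eqToHom (congrArg E.X (by omega : n + 1 - 1 = n)))
    then hc.choose else 0
termination_by n => (b + 1 - n).toNat
decreasing_by omega

open Classical in
lemma hfun_spec (𝒳 : Set A) (X E : CochainComplex A ℤ) (f : X ⟶ E) (b : ℤ)
    (hb : ∀ i : ℤ, b < i → IsZero (X.X i)) (hmem : ∀ i : ℤ, X.X i ∈ 𝒳)
    (hE : RightAcyclicComplex 𝒳 E) (n : ℤ) :
    hfun X E f b n ≫ E.d (n - 1) n =
      f.f n - X.d n (n + 1) ≫ (hfun X E f b (n + 1) ≫
        eqToHom (congrArg E.X (by omega : n + 1 - 1 = n))) := by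
  have key : ∀ m : ℕ, ∀ n : ℤ, (b + 1 - n).toNat = m →
      hfun X E f b n ≫ E.d (n - 1) n =
        f.f n - X.d n (n + 1) ≫ (hfun X E f b (n + 1) ≫
          eqToHom (congrArg E.X (by omega : n + 1 - 1 = n))) := by
    intro m
    induction m using Nat.strong_induction_on with
    | _ m IH =>
      intro n hm
      by_cases hbn : b < n
      · have h1 : f.f n = 0 := (hb n hbn).eq_of_src _ _
        have h2 : X.d n (n + 1) = 0 := (hb n hbn).eq_of_src _ _
        rw [h1, h2]
        conv_lhs => rw [hfun]
        rw [dif_pos hbn, zero_comp, zero_comp, sub_zero]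
      · -- the inductive case
        have spec1 := IH ((b + 1 - (n + 1)).toNat) (by omega) (n + 1) rfl
        have hu : (f.f n - X.d n (n + 1) ≫ (hfun X E f b (n + 1) ≫
            eqToHom (congrArg E.X (by omega : n + 1 - 1 = n)))) ≫ E.d n (n + 1) = 0 := by
          have e1 : (eqToHom (congrArg E.X (by omega : n + 1 - 1 = n)) : E.X (n + 1 - 1) ⟶ E.X n) ≫
              E.d n (n + 1) = E.d (n + 1 - 1) (n + 1) := eqToHom_comp_d E (by omega) _
          rw [Preadditive.sub_comp]
          simp only [Category.assoc]
          rw [e1, spec1, f.comm n (n + 1)]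
          simp [Preadditive.comp_sub]
        have hc : ∃ k : X.X n ⟶ E.X (n - 1), k ≫ E.d (n - 1) n =
            f.f n - X.d n (n + 1) ≫ (hfun X E f b (n + 1) ≫
              eqToHom (congrArg E.X (by omega : n + 1 - 1 = n))) :=
          hE (X.X n) (hmem n) n _ hu
        conv_lhs => rw [hfun]
        rw [dif_neg hbn, dif_pos hc]
        exact hc.choose_spec
  exact key _ n rfl

/-- The null homotopy of a map from a bounded above complex with components in `𝒳`
to a right `𝒳`-acyclic complex. -/
noncomputable def nullHomotopy (𝒳 : Set A) (X E : CochainComplex A ℤ) (f : X ⟶ E) (b : ℤ)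
    (hb : ∀ i : ℤ, b < i → IsZero (X.X i)) (hmem : ∀ i : ℤ, X.X i ∈ 𝒳)
    (hE : RightAcyclicComplex 𝒳 E) : Homotopy f 0 where
  hom i j := if hij : j + 1 = i then
    hfun X E f b i ≫ eqToHom (congrArg E.X (by omega : i - 1 = j)) else 0
  zero i j hij := dif_neg (by simpa using hij)
  comm i := by
    have spec := hfun_spec 𝒳 X E f b hb hmem hE i
    rw [dNext_eq _ (show (ComplexShape.up ℤ).Rel i (i + 1) by simp),
      prevD_eq _ (show (ComplexShape.up ℤ).Rel (i - 1) i by simp)]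
    rw [dif_pos rfl, dif_pos (show (i - 1) + 1 = i by omega)]
    simp only [eqToHom_refl, Category.comp_id, HomologicalComplex.zero_f_apply, add_zero]
    rw [spec]
    abel

lemma rightAcyclic_of_homotopyEquiv (𝒳 : Set A) {K L : CochainComplex A ℤ}
    (e : HomotopyEquiv K L) (hK : RightAcyclicComplex 𝒳 K) : RightAcyclicComplex 𝒳 L := by
  intro Y hY n h hd
  obtain ⟨k, hk⟩ := hK Y hY n (h ≫ e.inv.f n) (by
    rw [Category.assoc, e.inv.comm n (n + 1), ← Category.assoc, hd, zero_comp])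
  set H := e.homotopyInvHomId.hom with hH
  refine ⟨k ≫ e.hom.f (n - 1) - h ≫ H n (n - 1), ?_⟩
  have comm := e.homotopyInvHomId.comm n
  rw [dNext_eq _ (show (ComplexShape.up ℤ).Rel n (n + 1) by simp),
    prevD_eq _ (show (ComplexShape.up ℤ).Rel (n - 1) n by simp)] at comm
  have c1 : h ≫ e.inv.f n ≫ e.hom.f n = (k ≫ e.hom.f (n - 1)) ≫ L.d (n - 1) n := by
    rw [← Category.assoc, ← hk, Category.assoc, ← e.hom.comm (n - 1) n, ← Category.assoc]
  have c3 : h ≫ e.inv.f n ≫ e.hom.f n = h + (h ≫ H n (n - 1)) ≫ L.d (n - 1) n := by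
    calc h ≫ e.inv.f n ≫ e.hom.f n
        = h ≫ (e.inv ≫ e.hom).f n := by
          rw [HomologicalComplex.comp_f]
      _ = h + (h ≫ H n (n - 1)) ≫ L.d (n - 1) n := by
          rw [comm]
          simp only [Preadditive.comp_add, HomologicalComplex.id_f, Category.comp_id]
          rw [← Category.assoc h (L.d n (n + 1)), hd, zero_comp, zero_add, Category.assoc]
          abel
  rw [Preadditive.sub_comp, ← c1, c3]
  abel

lemma rightAcyclic_of_iso (𝒳 : Set A) {M N : HomotopyCategory A (ComplexShape.up ℤ)}
    (e : M ≅ N) (hM : RightAcyclicComplex 𝒳 M.as) : RightAcyclicComplex 𝒳 N.as :=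
  rightAcyclic_of_homotopyEquiv 𝒳 (HomotopyCategory.homotopyEquivOfIso e) hM

lemma rightAcyclic_shift (𝒳 : Set A) (C : CochainComplex A ℤ) (n : ℤ)
    (hC : RightAcyclicComplex 𝒳 C) : RightAcyclicComplex 𝒳 (C⟦n⟧) := by
  intro Y hY i h hd
  have hd2 : h ≫ (n.negOnePow • C.d (i + n) (i + 1 + n)) = 0 := hd
  have hd3 : h ≫ C.d (i + n) (i + n + 1) = 0 := by
    have e : i + 1 + n = i + n + 1 := by ring
    rw [e] at hd2
    erw [Linear.comp_units_smul] at hd2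
    simpa [smul_smul, Int.units_mul_self] using congrArg (fun z => (n.negOnePow)⁻¹ • z) hd2
  obtain ⟨k, hk⟩ := hC Y hY (i + n) h hd3
  refine ⟨n.negOnePow • (k ≫ eqToHom (congrArg C.X (by omega : i + n - 1 = i - 1 + n))), ?_⟩
  show (n.negOnePow • (k ≫ eqToHom (congrArg C.X (by omega : i + n - 1 = i - 1 + n)))) ≫
    (n.negOnePow • C.d (i - 1 + n) (i + n)) = h
  rw [Linear.units_smul_comp, Linear.comp_units_smul, smul_smul, Int.units_mul_self, one_smul,
    Category.assoc, eqToHom_comp_d C (by omega : i + n - 1 = i - 1 + n) (i + n), hk]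

lemma rightAcyclic_zero (𝒳 : Set A) : RightAcyclicComplex 𝒳 (0 : CochainComplex A ℤ) := by
  intro Y hY n h hd
  have hz : IsZero ((0 : CochainComplex A ℤ).X n) :=
    (HomologicalComplex.eval A (ComplexShape.up ℤ) n).map_isZero (isZero_zero _)
  exact ⟨0, by rw [zero_comp]; exact (hz.eq_of_tgt _ _).symm⟩

lemma rightAcyclic_of_cone (𝒳 : Set A) {F G : CochainComplex A ℤ} (φ : F ⟶ G)
    (hF : RightAcyclicComplex 𝒳 F)
    (hcone : RightAcyclicComplex 𝒳 (CochainComplex.mappingCone φ)) :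
    RightAcyclicComplex 𝒳 G := by
  intro Y hY n h hd
  obtain ⟨v, hv⟩ := hcone Y hY n (h ≫ (inr φ).f n) (by
    rw [Category.assoc, inr_f_d, ← Category.assoc, hd, zero_comp])
  set a : Y ⟶ F.X n := v ≫ (fst φ).1.v (n - 1) n (by omega) with ha
  set bb : Y ⟶ G.X (n - 1) := v ≫ (snd φ).v (n - 1) (n - 1) (add_zero _) with hbb
  have hA : a ≫ F.d n (n + 1) = 0 := by
    have := congrArg (fun z => z ≫ (fst φ).1.v n (n + 1) rfl) hv
    rw [Category.assoc, Category.assoc, inr_f_fst_v, comp_zero,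
      d_fst_v φ (n - 1) n (n + 1) (by omega) rfl] at this
    simpa [ha, Preadditive.comp_neg] using this.symm
  obtain ⟨w, hw⟩ := hF Y hY n a hA
  have hB : a ≫ φ.f n + bb ≫ G.d (n - 1) n = h := by
    have := congrArg (fun z => z ≫ (snd φ).v n n (add_zero n)) hv
    rw [Category.assoc, Category.assoc, inr_f_snd_v, Category.comp_id,
      d_snd_v φ (n - 1) n (by omega)] at this
    simpa [ha, hbb, Preadditive.comp_add] using this
  refine ⟨w ≫ φ.f (n - 1) + bb, ?_⟩
  have : a ≫ φ.f n = w ≫ φ.f (n - 1) ≫ G.d (n - 1) n := by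
    rw [← hw]
    simp only [Category.assoc]
    rw [φ.comm (n - 1) n]
  rw [Preadditive.add_comp, Category.assoc, ← this, hB]

/-- The triangulated subcategory of right `𝒳`-acyclic complexes. -/
noncomputable def rightAcyclicSubcat (𝒳 : Set A) :
    ObjectProperty (HomotopyCategory A (ComplexShape.up ℤ)) :=
  fun M => RightAcyclicComplex 𝒳 M.as

instance (𝒳 : Set A) : (rightAcyclicSubcat 𝒳).IsClosedUnderIsomorphisms where
  of_iso e h := rightAcyclic_of_iso 𝒳 e h

instance (𝒳 : Set A) : (rightAcyclicSubcat 𝒳).IsTriangulatedClosed₂ :=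
  ObjectProperty.IsTriangulatedClosed₂.mk' (by
        rintro T ⟨F, G, φ, ⟨e⟩⟩ h₁ h₃
        have hF : RightAcyclicComplex 𝒳 F := rightAcyclic_of_iso 𝒳 (Triangle.π₁.mapIso e) h₁
        have hcone : RightAcyclicComplex 𝒳 (CochainComplex.mappingCone φ) :=
          rightAcyclic_of_iso 𝒳 (Triangle.π₃.mapIso e) h₃
        exact rightAcyclic_of_iso 𝒳 (Triangle.π₂.mapIso e).symm
          (rightAcyclic_of_cone 𝒳 φ hF hcone))

instance (𝒳 : Set A) : (rightAcyclicSubcat 𝒳).IsTriangulated where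
  exists_zero := by
        have h0 : IsZero ((HomotopyCategory.quotient A (ComplexShape.up ℤ)).obj
            (0 : CochainComplex A ℤ)) := by
          rw [HomotopyCategory.isZero_quotient_obj_iff]
          exact ⟨Homotopy.ofEq ((isZero_zero _).eq_of_src _ _)⟩
        exact ⟨_, h0, rightAcyclic_zero 𝒳⟩
  isStableUnderShiftBy n := ⟨fun M hM => rightAcyclic_of_iso 𝒳
        (((HomotopyCategory.quotient A (ComplexShape.up ℤ)).commShiftIso n).app M.as)
        (rightAcyclic_shift 𝒳 M.as n hM)⟩
  toIsTriangulatedClosed₂ := inferInstance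

lemma hom_eq_zero (𝒳 : Set A) (X : CochainComplex A ℤ) (hX : MinusComplexIn 𝒳 X)
    {M : HomotopyCategory A (ComplexShape.up ℤ)} (hM : RightAcyclicComplex 𝒳 M.as)
    (g : (HomotopyCategory.quotient A (ComplexShape.up ℤ)).obj X ⟶ M) : g = 0 := by
  obtain ⟨g₀, rfl⟩ := (HomotopyCategory.quotient A (ComplexShape.up ℤ)).map_surjective g
  obtain ⟨b, hb⟩ := hX.1
  rw [HomotopyCategory.eq_of_homotopy g₀ 0 (nullHomotopy 𝒳 X M.as g₀ b hb hX.2 hM),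
    Functor.map_zero]
  rfl

lemma comp_bijective (𝒳 : Set A) (X : CochainComplex A ℤ) (hX : MinusComplexIn 𝒳 X)
    {M M' : HomotopyCategory A (ComplexShape.up ℤ)} (s : M ⟶ M')
    (hs : (rightAcyclicSubcat 𝒳).trW s) :
    Function.Bijective (fun g : (HomotopyCategory.quotient A (ComplexShape.up ℤ)).obj X ⟶ M =>
      g ≫ s) := by
  obtain ⟨Z, w, v, dist, hZ⟩ := hs
  constructor
  · intro g₁ g₂ h12
    dsimp at h12
    have hsub : (g₁ - g₂) ≫ s = 0 := by rw [Preadditive.sub_comp, h12, sub_self]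
    obtain ⟨k, hk⟩ := Triangle.coyoneda_exact₂ _ (inv_rot_of_distTriang _ dist) (g₁ - g₂) hsub
    have hkz : k = 0 := hom_eq_zero 𝒳 X hX ((rightAcyclicSubcat 𝒳).le_shift (-1) Z hZ) k
    rw [hkz, zero_comp] at hk
    exact sub_eq_zero.1 hk
  · intro y
    have h0 : y ≫ w = 0 := hom_eq_zero 𝒳 X hX hZ (y ≫ w)
    obtain ⟨g, hg⟩ := Triangle.coyoneda_exact₂ _ dist y h0
    exact ⟨g, hg.symm⟩

lemma rightW_eq (𝒳 : Set A) : RightW 𝒳 = (rightAcyclicSubcat 𝒳).trW := by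
  ext K L φ
  constructor
  · rintro ⟨f, rfl, hf⟩
    exact ObjectProperty.trW.mk _
      (HomotopyCategory.mappingCone_triangleh_distinguished f) hf
  · rintro ⟨Z, w, v, dist, hZ⟩
    obtain ⟨f, rfl⟩ := (HomotopyCategory.quotient A (ComplexShape.up ℤ)).map_surjective φ
    refine ⟨f, rfl, ?_⟩
    exact ((rightAcyclicSubcat 𝒳).trW_iff_of_distinguished _
      (HomotopyCategory.mappingCone_triangleh_distinguished f)).1 ⟨Z, w, v, dist, hZ⟩

end aux

theorem stmt13 (𝒳 : Set A) (X C : CochainComplex A ℤ) (hX : MinusComplexIn 𝒳 X)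
    (D : Type*) [Category D] (L : HomotopyCategory A (ComplexShape.up ℤ) ⥤ D)
    [L.IsLocalization (RightW 𝒳)] :
    Function.Bijective
      (fun φ : ((HomotopyCategory.quotient A (ComplexShape.up ℤ)).obj X ⟶
          (HomotopyCategory.quotient A (ComplexShape.up ℤ)).obj C) => L.map φ) := by
  have hLoc : L.IsLocalization ((rightAcyclicSubcat 𝒳).trW) := by
    rw [← rightW_eq 𝒳]; infer_instance
  set W := (rightAcyclicSubcat 𝒳).trW with hW
  constructor
  · intro φ₁ φ₂ h
    dsimp at h
    rw [MorphismProperty.map_eq_iff_postcomp L W] at h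
    obtain ⟨Z, s, hs, fac⟩ := h
    exact (comp_bijective 𝒳 X hX s hs).1 fac
  · intro ψ
    obtain ⟨α, hα⟩ := Localization.exists_leftFraction L W ψ
    obtain ⟨g, hg⟩ := (comp_bijective 𝒳 X hX α.s α.hs).2 α.f
    dsimp at hg
    refine ⟨g, ?_⟩
    have : IsIso (L.map α.s) := Localization.inverts L W α.s α.hs
    dsimp
    rw [hα, ← cancel_mono (L.map α.s), MorphismProperty.LeftFraction.map_comp_map_s,
      ← L.map_comp, hg]

end stmt13
end
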